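/- (Well-definedness of the derived colouring.) Let σ be a winning strategy of the Petri game G_CP associated with an ω bipartite colouring problem CP. If s and s' are system places of σ above places s_a and s_b of N_CP respectively, with equal round counts r^T(s) = r^T(s') and r^B(s) = r^B(s'), and the strategy allows the colour transitions t_{a,c} at s and t_{b,c'} at s', then c = c'. Hence f(x, y) := the unique colour allowed at any system place s of σ with r^B(s) = x and r^T(s) = y is a well-defined partial function. -/

import Mathlib

namespace PG

/-- A (pre-)Petri net: places `P`, transitions `T`, flow maps and an initial marking.
Markings are sets of places (the nets considered are safe). -/
structure PreNet (P T : Type) : Type where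
  pre : T → Set P
  post : T → Set P
  init : Set P

namespace PreNet

variable {P T : Type}

/-- A transition is enabled at a marking if its preset is contained in it. -/
def enabled (N : PreNet P T) (M : Set P) (t : T) : Prop := N.pre t ⊆ M

/-- Firing a transition. -/
def fire (N : PreNet P T) (M : Set P) (t : T) : Set P := (M \ N.pre t) ∪ N.post t

/-- `Fires N M l M'` : firing the sequence `l` of (successively enabled) transitions
from `M` yields `M'`. -/
inductive Fires (N : PreNet P T) : Set P → List T → Set P → Prop
  | nil (M : Set P) : Fires N M [] M
  | cons {M M' : Set P} {t : T} {l : List T} :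
      N.enabled M t → Fires N (N.fire M t) l M' → Fires N M (t :: l) M'

/-- Reachable markings. -/
def reachable (N : PreNet P T) (M : Set P) : Prop := ∃ l : List T, N.Fires N.init l M

/-- Safety: firing never puts a token on an already occupied place, so markings
may be taken as sets of places. -/
def Safe (N : PreNet P T) : Prop :=
  ∀ M, N.reachable M → ∀ t, N.enabled M t → (M \ N.pre t) ∩ N.post t = ∅

/-- The flow relation on nodes. -/
def flow (N : PreNet P T) : P ⊕ T → P ⊕ T → Prop
  | Sum.inl p, Sum.inr t => p ∈ N.pre t
  | Sum.inr t, Sum.inl p => p ∈ N.post t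
  | _, _ => False

/-- Causal order: `x ≤ y` iff `x F⁺ y` or `x = y`. -/
def le (N : PreNet P T) : P ⊕ T → P ⊕ T → Prop := Relation.ReflTransGen N.flow

/-- Strict causal order `x F⁺ y`. -/
def lt (N : PreNet P T) : P ⊕ T → P ⊕ T → Prop := Relation.TransGen N.flow

/-- Conflict of two nodes. -/
def conflict (N : PreNet P T) (x y : P ⊕ T) : Prop :=
  ∃ t₁ t₂ : T, t₁ ≠ t₂ ∧ (N.pre t₁ ∩ N.pre t₂).Nonempty ∧
    N.le (Sum.inr t₁) x ∧ N.le (Sum.inr t₂) y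

/-- Concurrency of two nodes: neither causally related nor in conflict. -/
def concurrent (N : PreNet P T) (x y : P ⊕ T) : Prop :=
  ¬ N.le x y ∧ ¬ N.le y x ∧ ¬ N.conflict x y

end PreNet

/-- Well-formedness of a Petri net: presets nonempty and finite, postsets finite. -/
structure IsPetriNet {P T : Type} (N : PreNet P T) : Prop where
  pre_nonempty : ∀ t, (N.pre t).Nonempty
  pre_finite : ∀ t, (N.pre t).Finite
  post_finite : ∀ t, (N.post t).Finite

/-- Occurrence net. -/
structure IsOccurrenceNet {P T : Type} (N : PreNet P T) : Prop where
  toIsPetriNet : IsPetriNet N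
  acyclic : ∀ x, ¬ N.lt x x
  finitely_preceded : ∀ x, {y | N.le y x}.Finite
  place_pre_subsingleton : ∀ p : P, {t : T | p ∈ N.post t}.Subsingleton
  no_self_conflict : ∀ t : T, ¬ N.conflict (Sum.inr t) (Sum.inr t)
  init_eq : N.init = {p | ∀ t, p ∉ N.post t}

/-- Net homomorphism: preserves presets, postsets and the initial marking bijectively. -/
structure IsNetHom {P₁ T₁ P₂ T₂ : Type} (N₁ : PreNet P₁ T₁) (N₂ : PreNet P₂ T₂)
    (fp : P₁ → P₂) (ft : T₁ → T₂) : Prop where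
  pre_bij : ∀ t, Set.BijOn fp (N₁.pre t) (N₂.pre (ft t))
  post_bij : ∀ t, Set.BijOn fp (N₁.post t) (N₂.post (ft t))
  init_bij : Set.BijOn fp N₁.init N₂.init

/-- `(N, (fp, ft))` is a branching process of `N₀`. -/
structure IsBranchingProcess {P₀ T₀ P T : Type} (N₀ : PreNet P₀ T₀)
    (N : PreNet P T) (fp : P → P₀) (ft : T → T₀) : Prop where
  occ : IsOccurrenceNet N
  hom : IsNetHom N N₀ fp ft
  unique : ∀ t₁ t₂ : T, N.pre t₁ = N.pre t₂ → ft t₁ = ft t₂ → t₁ = t₂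

/-- The subprocess relation `B₁ ≤ B₂` between branching processes of the same net:
existence of an injective homomorphism commuting with the projections. -/
def BPle {P₀ T₀ P₁ T₁ P₂ T₂ : Type} (N₁ : PreNet P₁ T₁) (fp₁ : P₁ → P₀) (ft₁ : T₁ → T₀)
    (N₂ : PreNet P₂ T₂) (fp₂ : P₂ → P₀) (ft₂ : T₂ → T₀) : Prop :=
  ∃ (gp : P₁ → P₂) (gt : T₁ → T₂),
    IsNetHom N₁ N₂ gp gt ∧ fp₂ ∘ gp = fp₁ ∧ ft₂ ∘ gt = ft₁ ∧
    Function.Injective gp ∧ Function.Injective gt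

/-- Isomorphism `B₁ ≅ B₂` of branching processes: a bijective homomorphism
commuting with the projections. -/
def BPEquiv {P₀ T₀ P₁ T₁ P₂ T₂ : Type} (N₁ : PreNet P₁ T₁) (fp₁ : P₁ → P₀) (ft₁ : T₁ → T₀)
    (N₂ : PreNet P₂ T₂) (fp₂ : P₂ → P₀) (ft₂ : T₂ → T₀) : Prop :=
  ∃ (gp : P₁ → P₂) (gt : T₁ → T₂),
    IsNetHom N₁ N₂ gp gt ∧ fp₂ ∘ gp = fp₁ ∧ ft₂ ∘ gt = ft₁ ∧
    Function.Bijective gp ∧ Function.Bijective gt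

section Future

variable {P T : Type}

/-- Nodes of the future of a cut `C`: every place of `C` is a causal predecessor
of, or concurrent to, the node. -/
def futNode (N : PreNet P T) (C : Set P) (x : P ⊕ T) : Prop :=
  ∀ p ∈ C, N.le (Sum.inl p) x ∨ N.concurrent (Sum.inl p) x

abbrev FutP (N : PreNet P T) (C : Set P) : Type := {p : P // futNode N C (Sum.inl p)}
abbrev FutT (N : PreNet P T) (C : Set P) : Type := {t : T // futNode N C (Sum.inr t)}

/-- The future `Fut(B, C)` of a cut `C`: nodes as above, flow maps restricted,
initial marking `C`. -/
def futNet (N : PreNet P T) (C : Set P) : PreNet (FutP N C) (FutT N C) where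
  pre t := {p | p.1 ∈ N.pre t.1}
  post t := {p | p.1 ∈ N.post t.1}
  init := {p | p.1 ∈ C}

end Future

section Lkc

variable {P T P₀ T₀ : Type}

/-- The last known cut `lkc(t)` of a transition. -/
def lkc (N : PreNet P T) (t : T) : Set P :=
  {p | ¬ N.lt (Sum.inl p) (Sum.inr t) ∧
    ∀ t' : T, p ∈ N.post t' → N.le (Sum.inr t') (Sum.inr t)}

/-- The last known marking `lkm(t) = π(lkc(t))`. -/
def lkm (N : PreNet P T) (fp : P → P₀) (t : T) : Set P₀ := fp '' lkc N t

/-- Partial repetition cuts `prc(t₁, t₂)`. -/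
def prc (N : PreNet P T) (fp : P → P₀) (t₁ t₂ : T) : Prop :=
  lkm N fp t₁ = lkm N fp t₂ ∧ lkc N t₁ \ N.post t₁ = lkc N t₂ \ N.post t₂

/-- A loop of partial repetition cuts: `prc(t₁, t₂)` with `t₁ < t₂`. -/
def prcLoop (N : PreNet P T) (fp : P → P₀) (t₁ t₂ : T) : Prop :=
  prc N fp t₁ t₂ ∧ N.lt (Sum.inr t₁) (Sum.inr t₂)

end Lkc

section Glue

variable {P T P₀ T₀ : Type}

/-- Places of the cut-and-glued process `B - Fut(B,C₂) + Fut(B,C₁)'`: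
left places are those of `B` outside `Fut(B,C₂)` (keeping `C₂`), right places
are the fresh copies of the places of `Fut(B,C₁)` other than its initial marking. -/
def gluedPProp (N : PreNet P T) (C₁ C₂ : Set P) : P ⊕ P → Prop
  | Sum.inl p => ¬ futNode N C₂ (Sum.inl p) ∨ p ∈ C₂
  | Sum.inr p => futNode N C₁ (Sum.inl p) ∧ p ∉ C₁

/-- Transitions of the cut-and-glued process. -/
def gluedTProp (N : PreNet P T) (C₁ C₂ : Set P) : T ⊕ T → Prop
  | Sum.inl t => ¬ futNode N C₂ (Sum.inr t)
  | Sum.inr t => futNode N C₁ (Sum.inr t)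

abbrev GluedP (N : PreNet P T) (C₁ C₂ : Set P) : Type := {x : P ⊕ P // gluedPProp N C₁ C₂ x}
abbrev GluedT (N : PreNet P T) (C₁ C₂ : Set P) : Type := {x : T ⊕ T // gluedTProp N C₁ C₂ x}

/-- The cut-and-glued object `B_{C₁ → C₂} = B - Fut(B, C₂) + Fut(B, C₁)'`,
where the copy of `Fut(B, C₁)` is glued along `C₂` via the identification
`e : C₂ → C₁`. -/
def gluedNet (N : PreNet P T) (C₁ C₂ : Set P) (e : P → P) :
    PreNet (GluedP N C₁ C₂) (GluedT N C₁ C₂) where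
  pre t :=
    match t.1 with
    | Sum.inl t' => {x | ∃ q ∈ N.pre t', x.1 = Sum.inl q}
    | Sum.inr t' => {x | ∃ q ∈ N.pre t',
        (q ∉ C₁ ∧ x.1 = Sum.inr q) ∨ (q ∈ C₁ ∧ ∃ p ∈ C₂, e p = q ∧ x.1 = Sum.inl p)}
  post t :=
    match t.1 with
    | Sum.inl t' => {x | ∃ q ∈ N.post t', x.1 = Sum.inl q}
    | Sum.inr t' => {x | ∃ q ∈ N.post t',
        (q ∉ C₁ ∧ x.1 = Sum.inr q) ∨ (q ∈ C₁ ∧ ∃ p ∈ C₂, e p = q ∧ x.1 = Sum.inl p)}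
  init := {x | ∃ q ∈ N.init, x.1 = Sum.inl q}

/-- Projection of the glued process to the original underlying net (places). -/
def gluedFp {N : PreNet P T} {C₁ C₂ : Set P} (fp : P → P₀) (x : GluedP N C₁ C₂) : P₀ :=
  Sum.elim fp fp x.1

/-- Projection of the glued process to the original underlying net (transitions). -/
def gluedFt {N : PreNet P T} {C₁ C₂ : Set P} (ft : T → T₀) (x : GluedT N C₁ C₂) : T₀ :=
  Sum.elim ft ft x.1

end Glue

section Game

/-- A Petri game: an underlying net whose places are partitioned into system
places (`system`) and environment places (the rest), plus a set of bad markings. -/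
structure PetriGame (P₀ T₀ : Type) : Type where
  net : PreNet P₀ T₀
  system : Set P₀
  bad : Set (Set P₀)

variable {P₀ T₀ P T : Type}

/-- Winning strategy of a Petri game: a branching process of the underlying net
satisfying justified refusal, (global) safety, determinism and deadlock avoidance. -/
structure IsWinningStrategy (G : PetriGame P₀ T₀) (N : PreNet P T)
    (fp : P → P₀) (ft : T → T₀) : Prop where
  isBP : IsBranchingProcess G.net N fp ft
  justified_refusal : ∀ C : Set P,
    C.Pairwise (fun x y => N.concurrent (Sum.inl x) (Sum.inl y)) →
    ∀ t₀ : T₀, fp '' C = G.net.pre t₀ →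
    (¬ ∃ t : T, ft t = t₀ ∧ N.pre t = C) →
    ∃ p ∈ C, fp p ∈ G.system ∧ t₀ ∉ ft '' {t : T | p ∈ N.pre t}
  safety : ∀ M, N.reachable M → fp '' M ∉ G.bad
  determinism : ∀ p : P, fp p ∈ G.system → ∀ M, N.reachable M → p ∈ M →
    {t : T | p ∈ N.pre t ∧ N.enabled M t}.Subsingleton
  deadlock_avoiding : ∀ M, N.reachable M →
    (∃ t₀ : T₀, G.net.enabled (fp '' M) t₀) → ∃ t : T, N.enabled M t

/-- The synthesis problem: existence of a winning strategy. -/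
def HasWinningStrategy (G : PetriGame P₀ T₀) : Prop :=
  ∃ (P T : Type) (N : PreNet P T) (fp : P → P₀) (ft : T → T₀),
    IsWinningStrategy G N fp ft

/-- `K`-player Petri game: every reachable marking has at most `K` tokens. -/
def PetriGame.IsKPlayer (G : PetriGame P₀ T₀) (K : ℕ) : Prop :=
  ∀ M, G.net.reachable M → M.Finite ∧ M.ncard ≤ K

end Game

section Seg

variable {P₀ T₀ P T : Type}

/-- A maximally repeated strategy: partial repetition cuts have isomorphic futures. -/
def MaximallyRepeated (N : PreNet P T) (fp : P → P₀) (ft : T → T₀) : Prop :=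
  ∀ t₁ t₂ : T, prc N fp t₁ t₂ →
    BPEquiv (futNet N (lkc N t₁)) (fun p => fp p.1) (fun s => ft s.1)
            (futNet N (lkc N t₂)) (fun p => fp p.1) (fun s => ft s.1)

/-- Conditions (1) and (2) of a synchronisation segment of `t`:
`S ≤ Fut(B, lkc(t))` and every transition of the future not belonging to `S`
either has all places of its preset causal successors of `t`, or is a partial
repetition of a transition inside a loop of `S`. -/
def SegCond (N₀ : PreNet P₀ T₀) (N : PreNet P T) (fp : P → P₀) (ft : T → T₀) (t : T)
    {Ps Ts : Type} (S : PreNet Ps Ts) (fps : Ps → P₀) (fts : Ts → T₀) : Prop :=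
  IsBranchingProcess { N₀ with init := lkm N fp t } S fps fts ∧
  ∃ (gp : Ps → FutP N (lkc N t)) (gt : Ts → FutT N (lkc N t)),
    IsNetHom S (futNet N (lkc N t)) gp gt ∧
    (∀ p, fp (gp p).1 = fps p) ∧ (∀ s, ft (gt s).1 = fts s) ∧
    Function.Injective gp ∧ Function.Injective gt ∧
    ∀ t' : FutT N (lkc N t), t' ∉ Set.range gt →
      (∀ q ∈ N.pre t'.1, N.le (Sum.inr t) (Sum.inl q)) ∨
      (∃ s₁ s₂ s₃ : Ts, prcLoop N fp (gt s₁).1 (gt s₂).1 ∧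
        N.le (Sum.inr (gt s₃).1) (Sum.inr (gt s₂).1) ∧ prc N fp t'.1 (gt s₃).1)

/-- `S` is a synchronisation segment `Seg(t)`: a smallest branching process
(w.r.t. the subprocess relation) satisfying the segment conditions. -/
def IsSyncSegment (N₀ : PreNet P₀ T₀) (N : PreNet P T) (fp : P → P₀) (ft : T → T₀) (t : T)
    {Ps Ts : Type} (S : PreNet Ps Ts) (fps : Ps → P₀) (fts : Ts → T₀) : Prop :=
  SegCond N₀ N fp ft t S fps fts ∧
  ∀ (Ps' Ts' : Type) (S' : PreNet Ps' Ts') (fps' : Ps' → P₀) (fts' : Ts' → T₀),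
    SegCond N₀ N fp ft t S' fps' fts' → BPle S fps fts S' fps' fts'

end Seg

end PG

namespace PG

/-- Places of the net `N_CP` of the ω bipartite colouring problem: `env X a j` is
the place `e^X_{aj}` of environment player `a` of part `X` (`true` = top part,
`false` = bottom part) with index `j`; `chk a j k` is the environment place
recording the indices of the check transition `t_{aj−ak}`; `sys a` is the system
place `s_a`; `col c a` is the place `(c, a)` reached after choosing colour `c`. -/
inductive CPPlace (Col : Type) : Type
  | env : Bool → Fin 3 → Fin 6 → CPPlace Col
  | chk : Fin 3 → Fin 6 → Fin 6 → CPPlace Col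
  | sys : Fin 3 → CPPlace Col
  | col : Col → Fin 3 → CPPlace Col

/-- Transitions of `N_CP`: `round X r k` is the `k`-th transition of the round of
part `X` starting at index `roundStart r`, synchronising two of the three players
of the part; `check a j k` is the check transition `t_{aj−ak}`; `colour a c` is
the transition `t_{ac}` choosing colour `c` on the system place `s_a`. -/
inductive CPTrans (Col : Type) : Type
  | round : Bool → Fin 3 → Fin 3 → CPTrans Col
  | check : Fin 3 → Fin 6 → Fin 6 → CPTrans Col
  | colour : Fin 3 → Col → CPTrans Col

/-- Start index of the three rounds: the initial round starts at index 0, then the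
players alternate between a round starting at index 2 and one starting at 4. -/
def roundStart : Fin 3 → Fin 6 := ![0, 2, 4]

/-- Successor of a place index: `0 → 1 → 2 → 3 → 4 → 5 → 2`, so that after the
third round the players return to the places they were in before the second. -/
def nxt : Fin 6 → Fin 6 := ![1, 2, 3, 4, 5, 2]

/-- The net `N_CP`: a top part and a bottom part, each with three environment
players moving in rounds of three pairwise-synchronising transitions; check
transitions `t_{aj−ak}` take one player from each part and produce the recording
place and the system place `s_a`, from which a colour is chosen. -/
def cpNet (Col : Type) : PreNet (CPPlace Col) (CPTrans Col) where
  pre t :=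
    match t with
    | CPTrans.round X r k =>
      ![({CPPlace.env X 0 (roundStart r), CPPlace.env X 1 (roundStart r)} :
          Set (CPPlace Col)),
        {CPPlace.env X 1 (nxt (roundStart r)), CPPlace.env X 2 (roundStart r)},
        {CPPlace.env X 2 (nxt (roundStart r)), CPPlace.env X 0 (nxt (roundStart r))}] k
    | CPTrans.check a j k => {CPPlace.env true a j, CPPlace.env false a k}
    | CPTrans.colour a _ => {CPPlace.sys a}
  post t :=
    match t with
    | CPTrans.round X r k =>
      ![({CPPlace.env X 0 (nxt (roundStart r)), CPPlace.env X 1 (nxt (roundStart r))} :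
          Set (CPPlace Col)),
        {CPPlace.env X 1 (nxt (nxt (roundStart r))), CPPlace.env X 2 (nxt (roundStart r))},
        {CPPlace.env X 2 (nxt (nxt (roundStart r))),
          CPPlace.env X 0 (nxt (nxt (roundStart r)))}] k
    | CPTrans.check a j k => {CPPlace.chk a j k, CPPlace.sys a}
    | CPTrans.colour a c => {CPPlace.col c a}
  init := {p | ∃ (X : Bool) (a : Fin 3), p = CPPlace.env X a 0}

/-- Two players of the same part on places with indices `j` and `k` are in the
same round iff `j, k ∈ {0,1,2}` or `j, k ∈ {3,4}` or `j, k ∈ {5,2}`. -/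
def sameRound (j k : Fin 6) : Prop :=
  (j.1 ≤ 2 ∧ k.1 ≤ 2) ∨ ((j.1 = 3 ∨ j.1 = 4) ∧ (k.1 = 3 ∨ k.1 = 4)) ∨
  ((j.1 = 5 ∨ j.1 = 2) ∧ (k.1 = 5 ∨ k.1 = 2))

/-- A player with index `j` is one round ahead of a player with index `k` iff
`(j, k) ∈ {(3, 2), (5, 4)}`. -/
def aheadOne (j k : Fin 6) : Prop := (j.1 = 3 ∧ k.1 = 2) ∨ (j.1 = 5 ∧ k.1 = 4)

/-- The bad markings `B_Same ∪ B_DP ∪ B_VP ∪ B_HP ∪ B_init` of the Petri game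
`G_CP` of the ω-BCP with initial colours `Ci` and forbidden diagonal, horizontal
and vertical patterns `DP`, `HP`, `VP`. -/
def cpBad (Col : Type) (Ci : Set Col) (DP HP VP : Set (Col × Col)) :
    Set (Set (CPPlace Col)) :=
  {M | ∃ (a b : Fin 3) (j j' k k' : Fin 6) (cu cv : Col),
      CPPlace.chk a j j' ∈ M ∧ CPPlace.chk b k k' ∈ M ∧
      CPPlace.col cu a ∈ M ∧ CPPlace.col cv b ∈ M ∧
      ((sameRound j k ∧ sameRound j' k' ∧ cu ≠ cv) ∨
       (aheadOne j k ∧ aheadOne j' k' ∧ (cv, cu) ∈ DP) ∨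
       (aheadOne j k ∧ sameRound j' k' ∧ (cv, cu) ∈ VP) ∨
       (sameRound j k ∧ aheadOne j' k' ∧ (cv, cu) ∈ HP))} ∪
  {M | ∃ (a : Fin 3) (j j' : Fin 6) (cu : Col),
      CPPlace.chk a j j' ∈ M ∧ CPPlace.col cu a ∈ M ∧
      j.1 ≤ 1 ∧ j'.1 ≤ 1 ∧ cu ∉ Ci}

/-- The 6-player Petri game `G_CP` of an ω bipartite colouring problem: the six
environment players are on `env` places; the system places are the `s_a`. -/
def cpGame (Col : Type) (Ci : Set Col) (DP HP VP : Set (Col × Col)) :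
    PetriGame (CPPlace Col) (CPTrans Col) where
  net := cpNet Col
  system := {p | ∃ a : Fin 3, p = CPPlace.sys a}
  bad := cpBad Col Ci DP HP VP

/-- Number of rounds of part `X` played in a place `p` of a branching process of
`N_CP`: `r^X(p) = max(⌈|{round transitions of part X causally preceding p}| / 3⌉, 1)`. -/
noncomputable def roundsIn {P T Col : Type} (N : PreNet P T) (ft : T → CPTrans Col)
    (X : Bool) (p : P) : ℕ :=
  max ((Nat.card {t : T // N.le (Sum.inr t) (Sum.inl p) ∧
    ∃ r k, ft t = CPTrans.round X r k} + 2) / 3) 1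

/-- An ω bipartite colouring `f` (coordinates starting at 1) satisfies the
colouring constraint `(Ci, DP, HP, VP)`: the initial colour is in `Ci` and no
diagonal, horizontal or vertical pattern of `f` is forbidden. -/
def SatisfiesColouring {Col : Type} (Ci : Set Col) (DP HP VP : Set (Col × Col))
    (f : ℕ → ℕ → Col) : Prop :=
  f 1 1 ∈ Ci ∧ ∀ x y : ℕ, 1 ≤ x → 1 ≤ y →
    (f x y, f (x + 1) (y + 1)) ∉ DP ∧ (f x y, f (x + 1) y) ∉ HP ∧
    (f x y, f x (y + 1)) ∉ VP

end PG

namespace PG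

section Arith

/-! ### Arithmetic of rounds, movers and positions -/

def isMover (a : Fin 3) (τ : ℕ) : Prop :=
  1 ≤ τ ∧ ((τ % 3 = 1 ∧ a.1 ≠ 2) ∨ (τ % 3 = 2 ∧ a.1 ≠ 0) ∨ (τ % 3 = 0 ∧ a.1 ≠ 1))

instance (a : Fin 3) (τ : ℕ) : Decidable (isMover a τ) := by unfold isMover; infer_instance

def rdOf (τ : ℕ) : ℕ := (τ + 2) / 3
def rnd (τ : ℕ) : ℕ := max (rdOf τ) 1
def sIdx (m : ℕ) : Fin 6 := if m ≤ 1 then 0 else if m % 2 = 0 then 2 else 4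
def rIdxF (m : ℕ) : Fin 3 := if m ≤ 1 then 0 else if m % 2 = 0 then 1 else 2
def kF (τ : ℕ) : Fin 3 := if τ % 3 = 1 then 0 else if τ % 3 = 2 then 1 else 2
def mvA (τ : ℕ) : Fin 3 := if τ % 3 = 1 then 0 else if τ % 3 = 2 then 1 else 2
def mvB (τ : ℕ) : Fin 3 := if τ % 3 = 1 then 1 else if τ % 3 = 2 then 2 else 0
def sh (τ : ℕ) : Fin 3 := if τ % 3 = 1 then 1 else if τ % 3 = 2 then 2 else 0

def pIdx (a : Fin 3) (n : ℕ) : Fin 6 :=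
  if n = 0 then 0
  else if n % 3 = 1 then (if a.1 = 2 then sIdx (rdOf n) else nxt (sIdx (rdOf n)))
  else if n % 3 = 2 then (if a.1 = 1 then nxt (nxt (sIdx (rdOf n))) else nxt (sIdx (rdOf n)))
  else nxt (nxt (sIdx (rdOf n)))

def lastMove (a : Fin 3) (n : ℕ) : ℕ := if isMover a n then n else n - 1

def labOf (Col : Type) (X : Bool) (τ : ℕ) : CPTrans Col :=
  CPTrans.round X (rIdxF (rdOf τ)) (kF τ)

lemma lastMove_zero (a : Fin 3) : lastMove a 0 = 0 := by simp [lastMove, isMover]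

lemma lastMove_le (a : Fin 3) (n : ℕ) : lastMove a n ≤ n := by
  unfold lastMove; split <;> omega

lemma isMover_mvA (τ : ℕ) (h : 1 ≤ τ) : isMover (mvA τ) τ := by
  unfold isMover mvA
  have h3 : τ % 3 = 0 ∨ τ % 3 = 1 ∨ τ % 3 = 2 := by omega
  rcases h3 with h3 | h3 | h3 <;> simp [h3, h]

lemma isMover_mvB (τ : ℕ) (h : 1 ≤ τ) : isMover (mvB τ) τ := by
  unfold isMover mvB
  have h3 : τ % 3 = 0 ∨ τ % 3 = 1 ∨ τ % 3 = 2 := by omega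
  rcases h3 with h3 | h3 | h3 <;> simp [h3, h]

lemma mvA_ne_mvB (τ : ℕ) : mvA τ ≠ mvB τ := by
  unfold mvA mvB
  have h3 : τ % 3 = 0 ∨ τ % 3 = 1 ∨ τ % 3 = 2 := by omega
  rcases h3 with h3 | h3 | h3 <;> simp [h3]

lemma isMover_iff_eq (a : Fin 3) (τ : ℕ) (h : 1 ≤ τ) :
    isMover a τ ↔ (a = mvA τ ∨ a = mvB τ) := by
  unfold isMover mvA mvB
  have ha := a.2
  have h3 : τ % 3 = 0 ∨ τ % 3 = 1 ∨ τ % 3 = 2 := by omega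
  rcases h3 with h3 | h3 | h3 <;> simp only [h3, h, Fin.ext_iff] <;> simp <;> omega

lemma sh_mover (n : ℕ) (h : 1 ≤ n) : isMover (sh n) n ∧ isMover (sh n) (n+1) := by
  unfold isMover sh
  have h3 : n % 3 = 0 ∨ n % 3 = 1 ∨ n % 3 = 2 := by omega
  rcases h3 with h3 | h3 | h3 <;>
    · have h4 : (n+1) % 3 = (n % 3 + 1) % 3 := by omega
      simp [h3, h, h4] <;> omega

lemma mover_pred (a : Fin 3) (n : ℕ) (h1 : 1 ≤ n) (h : ¬ isMover a (n+1)) : isMover a n := by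
  unfold isMover at *
  have ha := a.2
  have h4 : (n+1) % 3 = (n % 3 + 1) % 3 := by omega
  rw [h4] at h
  have h3 : n % 3 = 0 ∨ n % 3 = 1 ∨ n % 3 = 2 := by omega
  rcases h3 with h3 | h3 | h3 <;> simp [h3] at h ⊢ <;> omega

lemma lastMove_succ_nonmover (a : Fin 3) (n : ℕ) (h : ¬ isMover a (n+1)) :
    lastMove a (n+1) = lastMove a n := by
  rcases Nat.eq_zero_or_pos n with rfl | hn
  · have h0 : ¬ isMover a 0 := by simp [isMover]
    have h1 : ¬ isMover a (0+1) := h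
    simp [lastMove, h0, h1]
  · have := mover_pred a n hn h
    simp [lastMove, h, this]

lemma lastMove_mover (a : Fin 3) (n : ℕ) (h : isMover a n) : lastMove a n = n := by
  simp [lastMove, h]

lemma sIdx_succ (q : ℕ) (h : 1 ≤ q) : nxt (nxt (sIdx q)) = sIdx (q + 1) := by
  unfold sIdx
  rcases Nat.even_or_odd q with he | ho
  · have h2 : q % 2 = 0 := Nat.even_iff.mp he
    have h1 : ¬ q ≤ 1 := by omega
    have h3 : ¬ (q+1) % 2 = 0 := by omega
    have h4 : ¬ (q+1) ≤ 1 := by omega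
    simp [h1, h2, h3, h4]; rfl
  · have h2 : ¬ q % 2 = 0 := by have := Nat.odd_iff.mp ho; omega
    have h3 : (q+1) % 2 = 0 := by have := Nat.odd_iff.mp ho; omega
    have h4 : ¬ (q+1) ≤ 1 := by omega
    by_cases h1 : q ≤ 1
    · have : q = 1 := by omega
      subst this; simp [h3]; rfl
    · simp [h1, h2, h3, h4]; rfl

lemma roundStart_rIdxF (m : ℕ) : roundStart (rIdxF m) = sIdx m := by
  unfold roundStart rIdxF sIdx
  by_cases h1 : m ≤ 1 <;> by_cases h2 : m % 2 = 0 <;> simp [h1, h2]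

lemma pIdx_mod0 (a : Fin 3) (n : ℕ) (h : n % 3 = 0) : pIdx a n = sIdx (rdOf (n+1)) := by
  rcases Nat.eq_zero_or_pos n with rfl | hn
  · simp [pIdx, rdOf, sIdx]
  · obtain ⟨q, rfl⟩ : ∃ q, n = 3 * q := ⟨n / 3, by omega⟩
    have hq : 1 ≤ q := by omega
    have h1 : ¬ (3*q = 0) := by omega
    have h2 : (3*q) % 3 = 0 := by omega
    have h3 : rdOf (3*q) = q := by unfold rdOf; omega
    have h4 : rdOf (3*q+1) = q + 1 := by unfold rdOf; omega
    simp only [pIdx, h1, if_false, h2, if_neg, h3, h4]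
    have h5 : ¬ ((3*q) % 3 = 1) := by omega
    have h6 : ¬ ((3*q) % 3 = 2) := by omega
    simp [h5, h6, sIdx_succ q hq]

lemma pIdx_mover_val (a : Fin 3) (τ : ℕ) (h : isMover a τ) :
    pIdx a τ = nxt (sIdx (rdOf τ)) ∨ pIdx a τ = nxt (nxt (sIdx (rdOf τ))) := by
  obtain ⟨h1, h2⟩ := h
  have h0 : ¬ (τ = 0) := by omega
  have h3 : τ % 3 = 0 ∨ τ % 3 = 1 ∨ τ % 3 = 2 := by omega
  have ha := a.2
  rcases h3 with h3 | h3 | h3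
  · right
    unfold pIdx
    simp [h0, h3]
  · simp [h3] at h2
    left
    unfold pIdx
    simp [h0, h3, h2]
  · simp [h3] at h2
    by_cases hh : a.1 = 1
    · right
      unfold pIdx
      simp [h0, h3, hh]
    · left
      unfold pIdx
      simp [h0, h3, hh]

end Arith
end PG
namespace PG
section Arith2
variable {Col : Type}

lemma cp_pre_round0 {X : Bool} {r : Fin 3} :
    (cpNet Col).pre (CPTrans.round X r 0) =
      {CPPlace.env X 0 (roundStart r), CPPlace.env X 1 (roundStart r)} := rfl

lemma cp_pre_round1 {X : Bool} {r : Fin 3} :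
    (cpNet Col).pre (CPTrans.round X r 1) =
      {CPPlace.env X 1 (nxt (roundStart r)), CPPlace.env X 2 (roundStart r)} := rfl

lemma cp_pre_round2 {X : Bool} {r : Fin 3} :
    (cpNet Col).pre (CPTrans.round X r 2) =
      {CPPlace.env X 2 (nxt (roundStart r)), CPPlace.env X 0 (nxt (roundStart r))} := rfl

lemma cp_post_round0 {X : Bool} {r : Fin 3} :
    (cpNet Col).post (CPTrans.round X r 0) =
      {CPPlace.env X 0 (nxt (roundStart r)), CPPlace.env X 1 (nxt (roundStart r))} := rfl

lemma cp_post_round1 {X : Bool} {r : Fin 3} :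
    (cpNet Col).post (CPTrans.round X r 1) =
      {CPPlace.env X 1 (nxt (nxt (roundStart r))), CPPlace.env X 2 (nxt (roundStart r))} := rfl

lemma cp_post_round2 {X : Bool} {r : Fin 3} :
    (cpNet Col).post (CPTrans.round X r 2) =
      {CPPlace.env X 2 (nxt (nxt (roundStart r))),
        CPPlace.env X 0 (nxt (nxt (roundStart r)))} := rfl

lemma rdOf_pos (τ : ℕ) (h : 1 ≤ τ) : 1 ≤ rdOf τ := by unfold rdOf; omega

lemma rnd_eq_rdOf (τ : ℕ) (h : 1 ≤ τ) : rnd τ = rdOf τ := by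
  have := rdOf_pos τ h; unfold rnd; omega

lemma pre_labOf (X : Bool) (τ : ℕ) (hτ : 1 ≤ τ) :
    (cpNet Col).pre (labOf Col X τ) =
      {CPPlace.env X (mvA τ) (pIdx (mvA τ) (τ-1)), CPPlace.env X (mvB τ) (pIdx (mvB τ) (τ-1))} := by
  have h3 : τ % 3 = 0 ∨ τ % 3 = 1 ∨ τ % 3 = 2 := by omega
  rcases h3 with h3 | h3 | h3
  · -- τ % 3 = 0, kF = 2, movers 2,0
    have hk : kF τ = 2 := by unfold kF; simp [h3]
    have hA : mvA τ = 2 := by unfold mvA; simp [h3]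
    have hB : mvB τ = 0 := by unfold mvB; simp [h3]
    have hm : (τ - 1) % 3 = 2 := by omega
    have h0 : ¬ (τ - 1 = 0) := by omega
    have hr : rdOf (τ-1) = rdOf τ := by unfold rdOf; omega
    have hp2 : pIdx 2 (τ-1) = nxt (sIdx (rdOf τ)) := by
      unfold pIdx; simp [h0, hm, hr]
    have hp0 : pIdx 0 (τ-1) = nxt (sIdx (rdOf τ)) := by
      unfold pIdx; simp [h0, hm, hr]
    rw [labOf, hk, hA, hB, cp_pre_round2, roundStart_rIdxF, hp2, hp0]
  · -- τ % 3 = 1, kF = 0, movers 0,1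
    have hk : kF τ = 0 := by unfold kF; simp [h3]
    have hA : mvA τ = 0 := by unfold mvA; simp [h3]
    have hB : mvB τ = 1 := by unfold mvB; simp [h3]
    have hm : (τ - 1) % 3 = 0 := by omega
    have hr : (τ - 1) + 1 = τ := by omega
    have hp0 : pIdx 0 (τ-1) = sIdx (rdOf τ) := by rw [pIdx_mod0 0 _ hm, hr]
    have hp1 : pIdx 1 (τ-1) = sIdx (rdOf τ) := by rw [pIdx_mod0 1 _ hm, hr]
    rw [labOf, hk, hA, hB, cp_pre_round0, roundStart_rIdxF, hp0, hp1]
  · -- τ % 3 = 2, kF = 1, movers 1,2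
    have hk : kF τ = 1 := by unfold kF; simp [h3]
    have hA : mvA τ = 1 := by unfold mvA; simp [h3]
    have hB : mvB τ = 2 := by unfold mvB; simp [h3]
    have hm : (τ - 1) % 3 = 1 := by omega
    have h0 : ¬ (τ - 1 = 0) := by omega
    have hr : rdOf (τ-1) = rdOf τ := by unfold rdOf; omega
    have hp1 : pIdx 1 (τ-1) = nxt (sIdx (rdOf τ)) := by
      unfold pIdx; simp [h0, hm, hr]
    have hp2 : pIdx 2 (τ-1) = sIdx (rdOf τ) := by
      unfold pIdx; simp [h0, hm, hr]
    rw [labOf, hk, hA, hB, cp_pre_round1, roundStart_rIdxF, hp1, hp2]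

lemma post_labOf (X : Bool) (τ : ℕ) (hτ : 1 ≤ τ) :
    (cpNet Col).post (labOf Col X τ) =
      {CPPlace.env X (mvA τ) (pIdx (mvA τ) τ), CPPlace.env X (mvB τ) (pIdx (mvB τ) τ)} := by
  have h0 : ¬ (τ = 0) := by omega
  have h3 : τ % 3 = 0 ∨ τ % 3 = 1 ∨ τ % 3 = 2 := by omega
  rcases h3 with h3 | h3 | h3
  · have hk : kF τ = 2 := by unfold kF; simp [h3]
    have hA : mvA τ = 2 := by unfold mvA; simp [h3]
    have hB : mvB τ = 0 := by unfold mvB; simp [h3]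
    have hp2 : pIdx 2 τ = nxt (nxt (sIdx (rdOf τ))) := by unfold pIdx; simp [h0, h3]
    have hp0 : pIdx 0 τ = nxt (nxt (sIdx (rdOf τ))) := by unfold pIdx; simp [h0, h3]
    rw [labOf, hk, hA, hB, cp_post_round2, roundStart_rIdxF, hp2, hp0]
  · have hk : kF τ = 0 := by unfold kF; simp [h3]
    have hA : mvA τ = 0 := by unfold mvA; simp [h3]
    have hB : mvB τ = 1 := by unfold mvB; simp [h3]
    have hp0 : pIdx 0 τ = nxt (sIdx (rdOf τ)) := by unfold pIdx; simp [h0, h3]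
    have hp1 : pIdx 1 τ = nxt (sIdx (rdOf τ)) := by unfold pIdx; simp [h0, h3]
    rw [labOf, hk, hA, hB, cp_post_round0, roundStart_rIdxF, hp0, hp1]
  · have hk : kF τ = 1 := by unfold kF; simp [h3]
    have hA : mvA τ = 1 := by unfold mvA; simp [h3]
    have hB : mvB τ = 2 := by unfold mvB; simp [h3]
    have hp1 : pIdx 1 τ = nxt (nxt (sIdx (rdOf τ))) := by unfold pIdx; simp [h0, h3]
    have hp2 : pIdx 2 τ = nxt (sIdx (rdOf τ)) := by unfold pIdx; simp [h0, h3]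
    rw [labOf, hk, hA, hB, cp_post_round1, roundStart_rIdxF, hp1, hp2]

lemma pIdx_stable (a : Fin 3) (n : ℕ) (h : ¬ isMover a (n+1)) : pIdx a (n+1) = pIdx a n := by
  have ha := a.2
  have h3 : (n+1) % 3 = 0 ∨ (n+1) % 3 = 1 ∨ (n+1) % 3 = 2 := by omega
  have h1 : (1:ℕ) ≤ n + 1 := by omega
  unfold isMover at h
  rcases h3 with h3 | h3 | h3
  · -- nonmover is 1
    have haa : a.1 = 1 := by simp [h3] at h; omega
    have hm : n % 3 = 2 := by omega
    have h0 : ¬ (n = 0) := by omega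
    have hr : rdOf (n+1) = rdOf n := by unfold rdOf; omega
    unfold pIdx; simp [h0, h3, hm, haa, hr]
  · have haa : a.1 = 2 := by simp [h3] at h; omega
    have hm : n % 3 = 0 := by omega
    have hp : pIdx a n = sIdx (rdOf (n+1)) := pIdx_mod0 a n hm
    rw [hp]; unfold pIdx; simp [h3, haa]
  · have haa : a.1 = 0 := by simp [h3] at h; omega
    have hm : n % 3 = 1 := by omega
    have h0 : ¬ (n = 0) := by omega
    have hr : rdOf (n+1) = rdOf n := by unfold rdOf; omega
    unfold pIdx; simp [h0, h3, hm, haa, hr]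

lemma pIdx_class (a : Fin 3) (τ : ℕ) (h : τ = 0 ∨ isMover a τ) :
    (rnd τ = 1 ∧ (pIdx a τ).1 ≤ 2) ∨
    (rnd τ % 2 = 0 ∧ ((pIdx a τ).1 = 3 ∨ (pIdx a τ).1 = 4)) ∨
    (rnd τ % 2 = 1 ∧ rnd τ ≠ 1 ∧ ((pIdx a τ).1 = 5 ∨ (pIdx a τ).1 = 2)) := by
  rcases h with rfl | h
  · left
    constructor
    · unfold rnd rdOf; omega
    · simp [pIdx]
  · have h1 : 1 ≤ τ := h.1
    have hv := pIdx_mover_val a τ h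
    have hr := rnd_eq_rdOf τ h1
    have hm1 : 1 ≤ rdOf τ := rdOf_pos τ h1
    by_cases hc1 : rdOf τ ≤ 1
    · have : rdOf τ = 1 := by omega
      left
      rw [hr, this]
      have hs : sIdx (rdOf τ) = 0 := by rw [this]; rfl
      rw [hs] at hv
      rcases hv with hv | hv <;> rw [hv] <;> decide
    · by_cases hc2 : rdOf τ % 2 = 0
      · right; left
        have hs : sIdx (rdOf τ) = 2 := by unfold sIdx; simp [hc1, hc2]
        rw [hs] at hv
        constructor
        · omega
        · rcases hv with hv | hv <;> rw [hv] <;> decide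
      · right; right
        have hs : sIdx (rdOf τ) = 4 := by unfold sIdx; simp [hc1, hc2]
        rw [hs] at hv
        refine ⟨by omega, by omega, ?_⟩
        rcases hv with hv | hv <;> rw [hv] <;> decide

lemma sameRound_of (a d : Fin 3) (τ σ : ℕ) (ha : τ = 0 ∨ isMover a τ)
    (hd : σ = 0 ∨ isMover d σ) (h : rnd τ = rnd σ) :
    sameRound (pIdx a τ) (pIdx d σ) := by
  have c1 := pIdx_class a τ ha
  have c2 := pIdx_class d σ hd
  unfold sameRound
  rcases c1 with ⟨e1, f1⟩ | ⟨e1, f1⟩ | ⟨e1, e1', f1⟩ <;>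
    rcases c2 with ⟨e2, f2⟩ | ⟨e2, f2⟩ | ⟨e2, e2', f2⟩ <;>
      first
        | (exact Or.inl ⟨f1, f2⟩)
        | (exact Or.inr (Or.inl ⟨f1, f2⟩))
        | (exact Or.inr (Or.inr ⟨f1, f2⟩))
        | omega

end Arith2
end PG
namespace PG
section NetBasic

open PreNet

variable {P T : Type} {N : PreNet P T}

lemma flow_to_place {x : P ⊕ T} {q : P} (h : N.flow x (Sum.inl q)) :
    ∃ w, x = Sum.inr w ∧ q ∈ N.post w := by
  cases x with
  | inl p => exact absurd h (by simp [PreNet.flow])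
  | inr w => exact ⟨w, rfl, h⟩

lemma flow_to_trans {x : P ⊕ T} {w : T} (h : N.flow x (Sum.inr w)) :
    ∃ z, x = Sum.inl z ∧ z ∈ N.pre w := by
  cases x with
  | inl p => exact ⟨p, rfl, h⟩
  | inr v => exact absurd h (by simp [PreNet.flow])

lemma le_inr_inl {v : T} {q : P} (h : N.le (Sum.inr v) (Sum.inl q)) :
    ∃ w, q ∈ N.post w ∧ (v = w ∨ ∃ z ∈ N.pre w, N.le (Sum.inr v) (Sum.inl z)) := by
  rcases Relation.ReflTransGen.cases_tail h with h' | ⟨c, hc, hflow⟩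
  · exact absurd h' (by simp)
  · obtain ⟨w, rfl, hw⟩ := flow_to_place hflow
    refine ⟨w, hw, ?_⟩
    rcases Relation.ReflTransGen.cases_tail hc with h' | ⟨c', hc', hflow'⟩
    · left; exact (Sum.inr.injEq _ _).mp h'.symm |>.symm ▸ rfl
    · obtain ⟨z, rfl, hz⟩ := flow_to_trans hflow'
      exact Or.inr ⟨z, hz, hc'⟩

lemma le_inl_inl {q q' : P} (h : N.le (Sum.inl q) (Sum.inl q')) :
    q = q' ∨ ∃ w, q ∈ N.pre w ∧ N.le (Sum.inr w) (Sum.inl q') := by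
  rcases Relation.ReflTransGen.cases_head h with h' | ⟨c, hflow, hc⟩
  · left; exact Sum.inl.injEq q q' |>.mp h'
  · right
    cases c with
    | inl p => exact absurd hflow (by simp [PreNet.flow])
    | inr w => exact ⟨w, hflow, hc⟩

lemma le_inr_inr {v w : T} (h : N.le (Sum.inr v) (Sum.inr w)) :
    v = w ∨ ∃ z ∈ N.pre w, N.le (Sum.inr v) (Sum.inl z) := by
  rcases Relation.ReflTransGen.cases_tail h with h' | ⟨c, hc, hflow⟩
  · left; exact (Sum.inr.injEq _ _).mp h'.symm |>.symm ▸ rfl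
  · obtain ⟨z, rfl, hz⟩ := flow_to_trans hflow
    exact Or.inr ⟨z, hz, hc⟩

lemma le_pre {z : P} {w : T} (h : z ∈ N.pre w) : N.le (Sum.inl z) (Sum.inr w) :=
  Relation.ReflTransGen.single h

lemma le_post {z : P} {w : T} (h : z ∈ N.post w) : N.le (Sum.inr w) (Sum.inl z) :=
  Relation.ReflTransGen.single h

lemma le_trans' {x y z : P ⊕ T} (h1 : N.le x y) (h2 : N.le y z) : N.le x z :=
  Relation.ReflTransGen.trans h1 h2

end NetBasic

section StratBasic

open PreNet

variable {Col : Type} [Finite Col] {Ci : Set Col} {DP HP VP : Set (Col × Col)}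
variable {P T : Type} {N : PreNet P T} {fp : P → CPPlace Col} {ft : T → CPTrans Col}

lemma bijOn_pair {α β : Type*} {f : α → β} {S : Set α} {A B : β}
    (h : Set.BijOn f S {A, B}) (hAB : A ≠ B) :
    ∃ zA zB, zA ≠ zB ∧ S = {zA, zB} ∧ f zA = A ∧ f zB = B := by
  obtain ⟨zA, hzA, hfA⟩ := h.surjOn (show A ∈ ({A, B} : Set β) by simp)
  obtain ⟨zB, hzB, hfB⟩ := h.surjOn (show B ∈ ({A, B} : Set β) by simp)
  refine ⟨zA, zB, ?_, ?_, hfA, hfB⟩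
  · intro hEq; exact hAB (hfA ▸ hfB ▸ hEq ▸ rfl)
  · apply Set.eq_of_subset_of_subset
    · intro z hz
      rcases h.mapsTo hz with h1 | h1
      · exact Or.inl (h.injOn hz hzA (h1.trans hfA.symm))
      · exact Or.inr (h.injOn hz hzB (h1.trans hfB.symm))
    · intro z hz; rcases hz with rfl | rfl <;> assumption

lemma bijOn_single {α β : Type*} {f : α → β} {S : Set α} {A : β}
    (h : Set.BijOn f S {A}) : ∃ z, S = {z} ∧ f z = A := by
  obtain ⟨z, hz, hfz⟩ := h.surjOn (show A ∈ ({A} : Set β) by simp)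
  refine ⟨z, ?_, hfz⟩
  apply Set.eq_of_subset_of_subset
  · intro z' hz'
    have h1 : f z' = A := h.mapsTo hz'
    exact h.injOn hz' hz (h1.trans hfz.symm)
  · intro z' hz'; rcases hz' with rfl; exact hz

/-- nodes of part `X`. -/
def XNode (fp : P → CPPlace Col) (ft : T → CPTrans Col) (X : Bool) (y : P ⊕ T) : Prop :=
  (∃ z, y = Sum.inl z ∧ ∃ a i, fp z = CPPlace.env X a i) ∨
  (∃ v, y = Sum.inr v ∧ ∃ r k, ft v = CPTrans.round X r k)

variable (hwin : IsWinningStrategy (cpGame Col Ci DP HP VP) N fp ft)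
include hwin

lemma producer_unique {q : P} {w w' : T} (h : q ∈ N.post w) (h' : q ∈ N.post w') : w = w' :=
  hwin.isBP.occ.place_pre_subsingleton q h h'

lemma exists_producer {q : P} (h : fp q ∉ (cpNet Col).init) : ∃ w, q ∈ N.post w := by
  by_contra hcon
  push_neg at hcon
  have hq : q ∈ N.init := by rw [hwin.isBP.occ.init_eq]; exact hcon
  exact h (hwin.isBP.hom.init_bij.mapsTo hq)

lemma fp_pre {q : P} {w : T} (h : q ∈ N.pre w) : fp q ∈ (cpNet Col).pre (ft w) :=
  (hwin.isBP.hom.pre_bij w).mapsTo h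

lemma fp_post {q : P} {w : T} (h : q ∈ N.post w) : fp q ∈ (cpNet Col).post (ft w) :=
  (hwin.isBP.hom.post_bij w).mapsTo h

lemma not_le_of_pre {w : T} {z₁ z₂ : P} (hz₁ : z₁ ∈ N.pre w) (hz₂ : z₂ ∈ N.pre w)
    (hne : z₁ ≠ z₂) : ¬ N.le (Sum.inl z₁) (Sum.inl z₂) := by
  intro hle
  rcases le_inl_inl hle with rfl | ⟨v, hv1, hv2⟩
  · exact hne rfl
  · by_cases hvw : v = w
    · subst hvw
      exact hwin.isBP.occ.acyclic (Sum.inl z₂)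
        (Relation.TransGen.head' (show N.flow (Sum.inl z₂) (Sum.inr v) from hz₂) hv2)
    · exact hwin.isBP.occ.no_self_conflict w
        ⟨v, w, hvw, ⟨z₁, hv1, hz₁⟩,
          le_trans' hv2 (Relation.ReflTransGen.single (show N.flow (Sum.inl z₂) (Sum.inr w) from hz₂)),
          Relation.ReflTransGen.refl⟩

lemma pre_concurrent {w : T} {z₁ z₂ : P} (hz₁ : z₁ ∈ N.pre w) (hz₂ : z₂ ∈ N.pre w)
    (hne : z₁ ≠ z₂) : N.concurrent (Sum.inl z₁) (Sum.inl z₂) := by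
  refine ⟨not_le_of_pre hwin hz₁ hz₂ hne, not_le_of_pre hwin hz₂ hz₁ hne.symm, ?_⟩
  rintro ⟨t₁, t₂, hne', hq, h1, h2⟩
  exact hwin.isBP.occ.no_self_conflict w
    ⟨t₁, t₂, hne', hq,
      le_trans' h1 (Relation.ReflTransGen.single (show N.flow (Sum.inl z₁) (Sum.inr w) from hz₁)),
      le_trans' h2 (Relation.ReflTransGen.single (show N.flow (Sum.inl z₂) (Sum.inr w) from hz₂))⟩

lemma post_round_label {q : P} {w : T} {X : Bool} {a : Fin 3} {i : Fin 6}
    (hq : fp q = CPPlace.env X a i) (hw : q ∈ N.post w) :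
    ∃ r k, ft w = CPTrans.round X r k := by
  have h := fp_post hwin hw
  rw [hq] at h
  rcases hft : ft w with ⟨X', r, k⟩ | ⟨a', j, k⟩ | ⟨a', c⟩ <;> rw [hft] at h
  · refine ⟨r, k, ?_⟩
    fin_cases k <;> simp [cpNet] at h ⊢ <;> rcases h with ⟨h, -⟩ | ⟨h, -⟩ <;> simp [h]
  · simp [cpNet] at h
  · simp [cpNet] at h

lemma pre_round_label {q : P} {w : T} {X X' : Bool} {a : Fin 3} {i : Fin 6} {r k : Fin 3}
    (hq : fp q = CPPlace.env X a i) (hw : q ∈ N.pre w) (hft : ft w = CPTrans.round X' r k) :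
    X' = X := by
  have h := fp_pre hwin hw
  rw [hq, hft] at h
  fin_cases k <;> simp [cpNet] at h <;> rcases h with ⟨h, -⟩ | ⟨h, -⟩ <;> simp [h]

lemma xnode_of_flow {X : Bool} {x y : P ⊕ T} (hf : N.flow x y)
    (hy : XNode fp ft X y) : XNode fp ft X x := by
  rcases hy with ⟨z, rfl, a, i, hz⟩ | ⟨v, rfl, r, k, hv⟩
  · obtain ⟨w, rfl, hw⟩ := flow_to_place hf
    obtain ⟨r, k, hr⟩ := post_round_label hwin hz hw
    exact Or.inr ⟨w, rfl, r, k, hr⟩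
  · obtain ⟨z, rfl, hz⟩ := flow_to_trans hf
    left
    refine ⟨z, rfl, ?_⟩
    have h := fp_pre hwin hz
    rw [hv] at h
    fin_cases k <;> simp [cpNet] at h <;>
      rcases h with h | h <;> exact ⟨_, _, h⟩

lemma le_xnode {X : Bool} {y : P ⊕ T} {q : P} {a : Fin 3} {i : Fin 6}
    (hq : fp q = CPPlace.env X a i) (h : N.le y (Sum.inl q)) : XNode fp ft X y := by
  induction h using Relation.ReflTransGen.head_induction_on with
  | refl => exact Or.inl ⟨q, rfl, a, i, hq⟩
  | head hf _ ih => exact xnode_of_flow hwin hf ih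

end StratBasic
end PG
namespace PG
section RunA

open PreNet

variable {Col : Type} [Finite Col] {Ci : Set Col} {DP HP VP : Set (Col × Col)}
variable {P T : Type} {N : PreNet P T} {fp : P → CPPlace Col} {ft : T → CPTrans Col}

lemma concurrent_symm {x y : P ⊕ T} (h : N.concurrent x y) : N.concurrent y x := by
  obtain ⟨h1, h2, h3⟩ := h
  refine ⟨h2, h1, ?_⟩
  rintro ⟨t₁, t₂, hne, hq, hl1, hl2⟩
  exact h3 ⟨t₂, t₁, hne.symm, by rwa [Set.inter_comm], hl2, hl1⟩

lemma mem_pre_round {q : CPPlace Col} {X : Bool} {r k : Fin 3}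
    (h : q ∈ (cpNet Col).pre (CPTrans.round X r k)) : ∃ a i, q = CPPlace.env X a i := by
  fin_cases k <;> simp [cpNet] at h <;> rcases h with h | h <;> exact ⟨_, _, h⟩

lemma mem_pre_check {q : CPPlace Col} {a : Fin 3} {j k : Fin 6}
    (h : q ∈ (cpNet Col).pre (CPTrans.check a j k)) :
    q = CPPlace.env true a j ∨ q = CPPlace.env false a k := h

lemma env_not_system {X : Bool} {a : Fin 3} {i : Fin 6} :
    CPPlace.env X a i ∉ (cpGame Col Ci DP HP VP).system := by
  rintro ⟨b, hb⟩
  simp [cpGame] at hb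

variable (hwin : IsWinningStrategy (cpGame Col Ci DP HP VP) N fp ft)
include hwin

lemma not_le_cross {a b : Fin 3} {j k : Fin 6} {zT zB : P}
    (hT : fp zT = CPPlace.env true a j) (hB : fp zB = CPPlace.env false b k) :
    ¬ N.le (Sum.inl zT) (Sum.inl zB) := by
  intro hle
  have := le_xnode hwin hB hle
  rcases this with ⟨z, hz, a', i', hz'⟩ | ⟨v, hv, _⟩
  · rw [Sum.inl.injEq] at hz
    subst hz
    rw [hT] at hz'
    simp at hz'
  · simp at hv

lemma cross_concurrent {a b : Fin 3} {j k : Fin 6} {zT zB : P}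
    (hT : fp zT = CPPlace.env true a j) (hB : fp zB = CPPlace.env false b k) :
    N.concurrent (Sum.inl zT) (Sum.inl zB) := by
  refine ⟨not_le_cross hwin hT hB, ?_, ?_⟩
  · intro hle
    have := le_xnode hwin hT hle
    rcases this with ⟨z, hz, a', i', hz'⟩ | ⟨v, hv, _⟩
    · rw [Sum.inl.injEq] at hz
      subst hz
      rw [hB] at hz'
      simp at hz'
    · simp at hv
  · rintro ⟨t₁, t₂, hne, ⟨q, hq1, hq2⟩, hl1, hl2⟩
    have x1 := le_xnode hwin hT hl1
    have x2 := le_xnode hwin hB hl2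
    rcases x1 with ⟨z, hz, _⟩ | ⟨v, hv, r₁, k₁, hft₁⟩
    · simp at hz
    rcases x2 with ⟨z, hz, _⟩ | ⟨v', hv', r₂, k₂, hft₂⟩
    · simp at hz
    rw [Sum.inr.injEq] at hv hv'
    subst hv; subst hv'
    have e1 := fp_pre hwin hq1
    rw [hft₁] at e1
    have e2 := fp_pre hwin hq2
    rw [hft₂] at e2
    obtain ⟨a1, i1, he1⟩ := mem_pre_round e1
    obtain ⟨a2, i2, he2⟩ := mem_pre_round e2
    rw [he1] at he2
    simp at he2

lemma forced_trans {C : Set P} (hpair : C.Pairwise (fun x y => N.concurrent (Sum.inl x) (Sum.inl y)))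
    (t₀ : CPTrans Col) (himg : fp '' C = (cpNet Col).pre t₀)
    (henv : ∀ z ∈ C, ∃ X a i, fp z = CPPlace.env X a i) :
    ∃ u, ft u = t₀ ∧ N.pre u = C := by
  by_contra hcon
  push_neg at hcon
  have h := hwin.justified_refusal C hpair t₀ himg (by
    rintro ⟨u, hu1, hu2⟩
    exact (hcon u hu1) hu2)
  obtain ⟨z, hz, hsys, -⟩ := h
  obtain ⟨X, a, i, hfz⟩ := henv z hz
  rw [hfz] at hsys
  exact env_not_system hsys

lemma forced_check {a : Fin 3} {j k : Fin 6} {zT zB : P}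
    (hT : fp zT = CPPlace.env true a j) (hB : fp zB = CPPlace.env false a k) :
    ∃ u, ft u = CPTrans.check a j k ∧ N.pre u = {zT, zB} := by
  have hne : zT ≠ zB := by
    intro h; rw [h, hB] at hT; simp at hT
  apply forced_trans hwin
  · intro x hx y hy hxy
    rcases hx with rfl | rfl <;> rcases hy with rfl | rfl
    · exact absurd rfl hxy
    · exact cross_concurrent hwin hT hB
    · exact concurrent_symm (cross_concurrent hwin hT hB)
    · exact absurd rfl hxy
  · rw [Set.image_pair, hT, hB]; rfl
  · rintro z (rfl | rfl)
    · exact ⟨true, a, j, hT⟩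
    · exact ⟨false, a, k, hB⟩

end RunA
end PG
namespace PG
section RunB

open PreNet

variable {Col : Type} [Finite Col] {Ci : Set Col} {DP HP VP : Set (Col × Col)}
variable {P T : Type}

/-- Specification of the (unique) environment run of part `X` up to `n` transitions. -/
structure RunSpec (N : PreNet P T) (fp : P → CPPlace Col) (ft : T → CPTrans Col)
    (X : Bool) (n : ℕ) (tr : ℕ → T) (oc : Fin 3 → ℕ → P) : Prop where
  occ_fp : ∀ a m, m ≤ n → fp (oc a m) = CPPlace.env X a (pIdx a m)
  occ_init : ∀ a, oc a 0 ∈ N.init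
  occ_stable : ∀ a m, m + 1 ≤ n → ¬ isMover a (m+1) → oc a (m+1) = oc a m
  tr_pre : ∀ τ, 1 ≤ τ → τ ≤ n → N.pre (tr τ) = {oc (mvA τ) (τ-1), oc (mvB τ) (τ-1)}
  tr_ft : ∀ τ, 1 ≤ τ → τ ≤ n → ft (tr τ) = labOf Col X τ
  occ_post : ∀ a m, 1 ≤ m → m ≤ n → isMover a m → oc a m ∈ N.post (tr m)
  le_char : ∀ a m, m ≤ n → ∀ v, N.le (Sum.inr v) (Sum.inl (oc a m)) ↔
      ∃ j, 1 ≤ j ∧ j ≤ lastMove a m ∧ v = tr j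
  not_consumed : ∀ a m, m ≤ n → ∀ j, 1 ≤ j → j ≤ m → oc a m ∉ N.pre (tr j)

variable {N : PreNet P T} {fp : P → CPPlace Col} {ft : T → CPTrans Col}
variable {X : Bool} {n : ℕ} {tr : ℕ → T} {oc : Fin 3 → ℕ → P}

namespace RunSpec

lemma oc_ne (hs : RunSpec N fp ft X n tr oc) {a d : Fin 3} {m m' : ℕ}
    (hm : m ≤ n) (hm' : m' ≤ n) (hne : a ≠ d) : oc a m ≠ oc d m' := by
  intro h
  have h1 := hs.occ_fp a m hm
  have h2 := hs.occ_fp d m' hm'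
  rw [h, h2] at h1
  simp at h1
  exact hne (h1.1.symm)

lemma oc_eq_lastMove (hs : RunSpec N fp ft X n tr oc) (a : Fin 3) :
    ∀ m, m ≤ n → oc a m = oc a (lastMove a m) := by
  intro m
  induction m with
  | zero => intro _; rw [lastMove_zero]
  | succ m ih =>
    intro hm
    by_cases h : isMover a (m+1)
    · rw [lastMove_mover a _ h]
    · rw [lastMove_succ_nonmover a m h, hs.occ_stable a m hm h]
      exact ih (by omega)

lemma oc_producer (hs : RunSpec N fp ft X n tr oc) (a : Fin 3) (m : ℕ) (hm : m ≤ n) :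
    (lastMove a m = 0 ∧ oc a m ∈ N.init) ∨
    (1 ≤ lastMove a m ∧ oc a m ∈ N.post (tr (lastMove a m))) := by
  rcases Nat.eq_zero_or_pos (lastMove a m) with h0 | h1
  · left
    refine ⟨h0, ?_⟩
    rw [hs.oc_eq_lastMove a m hm, h0]
    exact hs.occ_init a
  · right
    refine ⟨h1, ?_⟩
    rw [hs.oc_eq_lastMove a m hm]
    have hlm : isMover a (lastMove a m) := by
      by_cases hmov : isMover a m
      · rwa [lastMove_mover a m hmov]
      · have hm2 : 1 ≤ m - 1 := by
          unfold lastMove at h1; simp [hmov] at h1; omega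
        have heq : lastMove a m = m - 1 := by unfold lastMove; simp [hmov]
        rw [heq]
        have hmeq : (m - 1) + 1 = m := by omega
        exact mover_pred a (m-1) hm2 (by rwa [hmeq])
    exact hs.occ_post a (lastMove a m) h1 (le_trans (lastMove_le a m) hm) hlm

lemma tr_inj (hs : RunSpec N fp ft X n tr oc) {i j : ℕ} (hi : 1 ≤ i) (hij : i < j)
    (hj : j ≤ n) : tr i ≠ tr j := by
  intro h
  have hp := hs.tr_pre j (by omega) hj
  have hmem : oc (mvA j) (j-1) ∈ N.pre (tr j) := by rw [hp]; left; rfl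
  rw [← h] at hmem
  exact hs.not_consumed (mvA j) (j-1) (by omega) i hi (by omega) hmem

lemma oc_pair_concurrent (hs : RunSpec N fp ft X n tr oc) {a d : Fin 3} {m : ℕ}
    (hm : m ≤ n) (hne : a ≠ d) :
    N.concurrent (Sum.inl (oc a m)) (Sum.inl (oc d m)) := by
  have hocne : oc a m ≠ oc d m := hs.oc_ne hm hm hne
  have key : ∀ (x y : Fin 3), x ≠ y → ¬ N.le (Sum.inl (oc x m)) (Sum.inl (oc y m)) := by
    intro x y hxy hle
    rcases le_inl_inl hle with h | ⟨v, hv1, hv2⟩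
    · exact hs.oc_ne hm hm hxy h
    · obtain ⟨j, hj1, hj2, rfl⟩ := (hs.le_char y m hm v).mp hv2
      exact hs.not_consumed x m hm j hj1 (le_trans hj2 (lastMove_le y m)) hv1
  refine ⟨key a d hne, key d a hne.symm, ?_⟩
  rintro ⟨t₁, t₂, htne, ⟨q, hq1, hq2⟩, hl1, hl2⟩
  obtain ⟨j₁, hj11, hj12, rfl⟩ := (hs.le_char a m hm t₁).mp hl1
  obtain ⟨j₂, hj21, hj22, rfl⟩ := (hs.le_char d m hm t₂).mp hl2
  have hjne : j₁ ≠ j₂ := by rintro rfl; exact htne rfl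
  have hle1 := le_trans hj12 (lastMove_le a m)
  have hle2 := le_trans hj22 (lastMove_le d m)
  rcases Nat.lt_or_ge j₁ j₂ with hlt | hge
  · have hp := hs.tr_pre j₂ hj21 (le_trans hle2 hm)
    rw [hp] at hq2
    rcases hq2 with rfl | rfl <;>
      exact hs.not_consumed _ (j₂-1) (by omega) j₁ hj11 (by omega) hq1
  · have hlt : j₂ < j₁ := by omega
    have hp := hs.tr_pre j₁ hj11 (le_trans hle1 hm)
    rw [hp] at hq1
    rcases hq1 with rfl | rfl <;>
      exact hs.not_consumed _ (j₁-1) (by omega) j₂ hj21 (by omega) hq2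

lemma oc_live (hs : RunSpec N fp ft X n tr oc) (a : Fin 3) :
    ∀ (j m : ℕ), j ≤ m → m ≤ n → (∀ τ, j < τ → τ ≤ m → ¬ isMover a τ) →
      oc a m = oc a j ∧ lastMove a m = lastMove a j := by
  intro j m
  induction m with
  | zero => intro h1 _ _; have : j = 0 := by omega
            subst this; exact ⟨rfl, rfl⟩
  | succ m ih =>
    intro h1 h2 h3
    rcases Nat.lt_or_ge j (m+1) with hj | hj
    · have hnm : ¬ isMover a (m+1) := h3 (m+1) (by omega) (le_refl _)
      have e1 := hs.occ_stable a m h2 hnm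
      have e2 := lastMove_succ_nonmover a m hnm
      have ⟨e3, e4⟩ := ih (by omega) (by omega) (fun τ ht1 ht2 => h3 τ ht1 (by omega))
      exact ⟨e1.trans e3, e2.trans e4⟩
    · have : j = m + 1 := by omega
      subst this; exact ⟨rfl, rfl⟩

end RunSpec
end RunB
end PG
namespace PG
section RunC

open PreNet

variable {Col : Type} [Finite Col] {Ci : Set Col} {DP HP VP : Set (Col × Col)}
variable {P T : Type} {N : PreNet P T} {fp : P → CPPlace Col} {ft : T → CPTrans Col}

variable (hwin : IsWinningStrategy (cpGame Col Ci DP HP VP) N fp ft)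
include hwin

lemma runSpec_zero (X : Bool) : ∃ tr oc, RunSpec N fp ft X 0 tr oc := by
  have hinit : ∀ (Y : Bool) (a : Fin 3), ∃ z, z ∈ N.init ∧ fp z = CPPlace.env Y a 0 := by
    intro Y a
    obtain ⟨z, hz, hfz⟩ := hwin.isBP.hom.init_bij.surjOn (show CPPlace.env Y a 0 ∈ (cpNet Col).init from ⟨Y, a, rfl⟩)
    exact ⟨z, hz, hfz⟩
  choose z hz hfz using hinit
  obtain ⟨u₀, -, -⟩ := forced_check hwin (hfz true 0) (hfz false 0)
  have hpi : ∀ a : Fin 3, pIdx a 0 = 0 := fun a => by simp [pIdx]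
  refine ⟨fun _ => u₀, fun a _ => z X a, ?_⟩
  constructor
  · intro a m hm
    interval_cases m
    rw [hpi a]; exact hfz X a
  · intro a; exact hz X a
  · intro a m hm; omega
  · intro τ h1 h2; omega
  · intro τ h1 h2; omega
  · intro a m h1 h2; omega
  · intro a m hm v
    interval_cases m
    rw [lastMove_zero]
    constructor
    · intro hle
      obtain ⟨w, hw, -⟩ := le_inr_inl hle
      have := hz X a
      rw [hwin.isBP.occ.init_eq] at this
      exact absurd hw (this w)
    · rintro ⟨j, h1, h2, -⟩; omega
  · intro a m hm j h1 h2; omega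

lemma runSpec_step {X : Bool} {n : ℕ} {tr : ℕ → T} {oc : Fin 3 → ℕ → P}
    (hs : RunSpec N fp ft X n tr oc) :
    ∃ tr' oc', RunSpec N fp ft X (n+1) tr' oc' ∧
      (∀ τ, τ ≤ n → tr' τ = tr τ) ∧ (∀ a m, m ≤ n → oc' a m = oc a m) := by
  set A := mvA (n+1) with hA
  set B := mvB (n+1) with hB
  have hAB : A ≠ B := mvA_ne_mvB (n+1)
  have hA_mov : isMover A (n+1) := isMover_mvA (n+1) (by omega)
  have hB_mov : isMover B (n+1) := isMover_mvB (n+1) (by omega)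
  have hpair : ({oc A n, oc B n} : Set P).Pairwise
      (fun x y => N.concurrent (Sum.inl x) (Sum.inl y)) := by
    intro x hx y hy hxy
    rcases hx with rfl | rfl <;> rcases hy with rfl | rfl
    · exact absurd rfl hxy
    · exact hs.oc_pair_concurrent (le_refl n) hAB
    · exact hs.oc_pair_concurrent (le_refl n) (Ne.symm hAB)
    · exact absurd rfl hxy
  have himg : fp '' {oc A n, oc B n} = (cpNet Col).pre (labOf Col X (n+1)) := by
    rw [Set.image_pair, hs.occ_fp A n (le_refl n), hs.occ_fp B n (le_refl n),
      pre_labOf X (n+1) (by omega)]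
    simp only [Nat.add_sub_cancel]
    rfl
  obtain ⟨u, hu_ft, hu_pre⟩ := forced_trans hwin hpair _ himg (by
    rintro zz (rfl | rfl)
    · exact ⟨X, A, _, hs.occ_fp A n (le_refl n)⟩
    · exact ⟨X, B, _, hs.occ_fp B n (le_refl n)⟩)
  have hpost_bij : Set.BijOn fp (N.post u) ((cpNet Col).post (ft u)) := hwin.isBP.hom.post_bij u
  rw [hu_ft, post_labOf X (n+1) (by omega)] at hpost_bij
  obtain ⟨wA, wB, hwne, hupost, hfwA, hfwB⟩ := bijOn_pair hpost_bij (by simp [show mvA (n+1) ≠ mvB (n+1) from hAB])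
  have hwApost : wA ∈ N.post u := by rw [hupost]; left; rfl
  have hwBpost : wB ∈ N.post u := by rw [hupost]; right; rfl
  set tr' : ℕ → T := fun τ => if τ = n+1 then u else tr τ with htr'
  set oc' : Fin 3 → ℕ → P :=
    fun a m => if m = n+1 then (if a = A then wA else if a = B then wB else oc a n)
      else oc a m with hoc'
  have htr'_old : ∀ τ, τ ≤ n → tr' τ = tr τ := fun τ h => if_neg (by omega)
  have htr'_new : tr' (n+1) = u := if_pos rfl
  have hoc'_old : ∀ a m, m ≤ n → oc' a m = oc a m := fun a m h => if_neg (by omega)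
  have hoc'_A : oc' A (n+1) = wA := by simp [hoc']
  have hoc'_B : oc' B (n+1) = wB := by simp [hoc', Ne.symm hAB]
  have hoc'_non : ∀ a, ¬ isMover a (n+1) → oc' a (n+1) = oc a n := by
    intro a hnm
    have h1 : a ≠ A := fun h => hnm (h ▸ hA_mov)
    have h2 : a ≠ B := fun h => hnm (h ▸ hB_mov)
    simp [hoc', h1, h2]
  have hmem_new : ∀ a, isMover a (n+1) → oc' a (n+1) ∈ N.post u ∧
      fp (oc' a (n+1)) = CPPlace.env X a (pIdx a (n+1)) := by
    intro a hm
    rcases (isMover_iff_eq a (n+1) (by omega)).mp hm with rfl | rfl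
    · rw [hoc'_A]; exact ⟨hwApost, hfwA⟩
    · rw [hoc'_B]; exact ⟨hwBpost, hfwB⟩
  -- freshness of the new places
  have hnotinit : ∀ wE, wE ∈ N.post u → wE ∉ N.init := by
    intro wE h1 h2
    rw [hwin.isBP.occ.init_eq] at h2
    exact h2 u h1
  have hcyc : ∀ wE, wE ∈ N.post u → wE ∉ N.pre u := by
    intro wE h1 h2
    exact hwin.isBP.occ.acyclic (Sum.inr u)
      (Relation.TransGen.head' (show N.flow (Sum.inr u) (Sum.inl wE) from h1)
        (Relation.ReflTransGen.single (show N.flow (Sum.inl wE) (Sum.inr u) from h2)))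
  have hfresh : ∀ wE, wE ∈ N.post u → ∀ j, 1 ≤ j → j ≤ n → wE ∉ N.pre (tr j) := by
    intro wE hpostE j h1 h2 hmem
    rw [hs.tr_pre j h1 h2] at hmem
    have key : ∀ e : Fin 3, wE = oc e (j-1) → False := by
      intro e he
      rcases hs.oc_producer e (j-1) (by omega) with ⟨-, hinit⟩ | ⟨hl1, hpost2⟩
      · exact hnotinit wE hpostE (he ▸ hinit)
      · have : u = tr (lastMove e (j-1)) := producer_unique hwin hpostE (he ▸ hpost2)
        have hocA : oc A n ∈ N.pre u := by rw [hu_pre]; left; rfl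
        rw [this] at hocA
        exact hs.not_consumed A n (le_refl n) (lastMove e (j-1)) hl1
          (le_trans (lastMove_le e (j-1)) (by omega)) hocA
    rcases hmem with he | he
    · exact key _ he
    · exact key _ he
  -- le characterisation for the new places
  have char_new : ∀ (a : Fin 3), isMover a (n+1) → ∀ v,
      N.le (Sum.inr v) (Sum.inl (oc' a (n+1))) ↔ ∃ j, 1 ≤ j ∧ j ≤ n+1 ∧ v = tr' j := by
    intro a hmov v
    obtain ⟨hpostE, -⟩ := hmem_new a hmov
    constructor
    · intro hle
      obtain ⟨w', hw'post, hcase⟩ := le_inr_inl hle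
      have hw'u : w' = u := (producer_unique hwin hpostE hw'post).symm
      subst hw'u
      rcases hcase with rfl | ⟨z, hz, hlez⟩
      · exact ⟨n+1, by omega, le_refl _, htr'_new.symm⟩
      · rw [hu_pre] at hz
        have key : ∀ e : Fin 3, z = oc e n → ∃ j, 1 ≤ j ∧ j ≤ n+1 ∧ v = tr' j := by
          intro e he
          subst he
          obtain ⟨j, hj1, hj2, rfl⟩ := (hs.le_char e n (le_refl n) v).mp hlez
          have hjn : j ≤ n := le_trans hj2 (lastMove_le e n)
          exact ⟨j, hj1, by omega, (htr'_old j hjn).symm⟩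
        rcases hz with he | he
        · exact key _ he
        · exact key _ he
    · rintro ⟨j, hj1, hj2, rfl⟩
      by_cases hj : j = n+1
      · subst hj
        rw [htr'_new]
        exact le_post hpostE
      · have hjn : j ≤ n := by omega
        rw [htr'_old j hjn]
        have hn1 : 1 ≤ n := by omega
        obtain ⟨hs1, hs2⟩ := sh_mover n hn1
        have hle1 : N.le (Sum.inr (tr j)) (Sum.inl (oc (sh n) n)) :=
          (hs.le_char (sh n) n (le_refl n) (tr j)).mpr
            ⟨j, hj1, by rw [lastMove_mover (sh n) n hs1]; omega, rfl⟩
        have hins : oc (sh n) n ∈ N.pre u := by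
          rw [hu_pre]
          rcases (isMover_iff_eq (sh n) (n+1) (by omega)).mp hs2 with h | h
          · left; rw [h, ← hA]
          · right; rw [h, ← hB]; exact rfl
        exact le_trans' hle1 (le_trans' (le_pre hins) (le_post hpostE))
  refine ⟨tr', oc', ?_, htr'_old, hoc'_old⟩
  constructor
  · -- occ_fp
    intro a m hm
    by_cases hmm : m = n+1
    · subst hmm
      by_cases hmov : isMover a (n+1)
      · exact (hmem_new a hmov).2
      · rw [hoc'_non a hmov, hs.occ_fp a n (le_refl n), pIdx_stable a n hmov]
    · rw [hoc'_old a m (by omega)]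
      exact hs.occ_fp a m (by omega)
  · -- occ_init
    intro a
    rw [hoc'_old a 0 (by omega)]
    exact hs.occ_init a
  · -- occ_stable
    intro a m hm hnm
    by_cases hmm : m + 1 = n + 1
    · have hmn : m = n := by omega
      subst hmn
      rw [hoc'_non a hnm, hoc'_old a m (le_refl m)]
    · rw [hoc'_old a (m+1) (by omega), hoc'_old a m (by omega)]
      exact hs.occ_stable a m (by omega) hnm
  · -- tr_pre
    intro τ h1 h2
    by_cases hττ : τ = n+1
    · subst hττ
      rw [htr'_new, hu_pre]
      simp only [Nat.add_sub_cancel]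
      rw [hoc'_old A n (le_refl n), hoc'_old B n (le_refl n)]
    · have hτn : τ ≤ n := by omega
      rw [htr'_old τ hτn, hs.tr_pre τ h1 hτn,
        hoc'_old (mvA τ) (τ-1) (by omega), hoc'_old (mvB τ) (τ-1) (by omega)]
  · -- tr_ft
    intro τ h1 h2
    by_cases hττ : τ = n+1
    · subst hττ; rw [htr'_new]; exact hu_ft
    · rw [htr'_old τ (by omega)]; exact hs.tr_ft τ h1 (by omega)
  · -- occ_post
    intro a m h1 h2 hmov
    by_cases hmm : m = n+1
    · subst hmm
      rw [htr'_new]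
      exact (hmem_new a hmov).1
    · rw [htr'_old m (by omega), hoc'_old a m (by omega)]
      exact hs.occ_post a m h1 (by omega) hmov
  · -- le_char
    intro a m hm v
    by_cases hmm : m = n+1
    · subst hmm
      by_cases hmov : isMover a (n+1)
      · rw [char_new a hmov v, lastMove_mover a (n+1) hmov]
      · rw [hoc'_non a hmov, lastMove_succ_nonmover a n hmov]
        rw [hs.le_char a n (le_refl n) v]
        constructor
        · rintro ⟨j, hj1, hj2, rfl⟩
          exact ⟨j, hj1, hj2, (htr'_old j (le_trans hj2 (lastMove_le a n))).symm⟩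
        · rintro ⟨j, hj1, hj2, rfl⟩
          have hjn : j ≤ n := le_trans hj2 (lastMove_le a n)
          exact ⟨j, hj1, hj2, htr'_old j hjn⟩
    · have hmn : m ≤ n := by omega
      rw [hoc'_old a m hmn, hs.le_char a m hmn v]
      constructor
      · rintro ⟨j, hj1, hj2, rfl⟩
        exact ⟨j, hj1, hj2,
          (htr'_old j (le_trans hj2 (le_trans (lastMove_le a m) hmn))).symm⟩
      · rintro ⟨j, hj1, hj2, rfl⟩
        exact ⟨j, hj1, hj2, htr'_old j (le_trans hj2 (le_trans (lastMove_le a m) hmn))⟩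
  · -- not_consumed
    intro a m hm j hj1 hj2
    by_cases hmm : m = n+1
    · subst hmm
      by_cases hjj : j = n+1
      · subst hjj
        rw [htr'_new, hu_pre]
        by_cases hmov : isMover a (n+1)
        · obtain ⟨hpostE, -⟩ := hmem_new a hmov
          rintro (he | he)
          · exact hcyc _ hpostE (by rw [hu_pre, he]; left; rfl)
          · exact hcyc _ hpostE (by rw [hu_pre, he]; right; rfl)
        · rw [hoc'_non a hmov]
          have h1 : a ≠ A := fun h => hmov (h ▸ hA_mov)
          have h2 : a ≠ B := fun h => hmov (h ▸ hB_mov)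
          rintro (he | he)
          · exact hs.oc_ne (le_refl n) (le_refl n) h1 he
          · exact hs.oc_ne (le_refl n) (le_refl n) h2 he
      · have hjn : j ≤ n := by omega
        rw [htr'_old j hjn]
        by_cases hmov : isMover a (n+1)
        · obtain ⟨hpostE, -⟩ := hmem_new a hmov
          exact hfresh _ hpostE j hj1 hjn
        · rw [hoc'_non a hmov]
          exact hs.not_consumed a n (le_refl n) j hj1 hjn
    · have hmn : m ≤ n := by omega
      rw [hoc'_old a m hmn, htr'_old j (by omega)]
      exact hs.not_consumed a m hmn j hj1 (by omega)

lemma runSpec_exists (X : Bool) (n : ℕ) : ∃ tr oc, RunSpec N fp ft X n tr oc := by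
  induction n with
  | zero => exact runSpec_zero hwin X
  | succ n ih =>
    obtain ⟨tr, oc, hs⟩ := ih
    obtain ⟨tr', oc', hs', -, -⟩ := runSpec_step hwin hs
    exact ⟨tr', oc', hs'⟩

lemma runSpec_agree {X : Bool} {n n' : ℕ} {tr tr' : ℕ → T} {oc oc' : Fin 3 → ℕ → P}
    (h : RunSpec N fp ft X n tr oc) (h' : RunSpec N fp ft X n' tr' oc') :
    ∀ m, m ≤ n → m ≤ n' →
      (∀ a, oc a m = oc' a m) ∧ (∀ τ, 1 ≤ τ → τ ≤ m → tr τ = tr' τ) := by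
  intro m
  induction m with
  | zero =>
    intro h1 h2
    refine ⟨?_, by omega⟩
    intro a
    apply hwin.isBP.hom.init_bij.injOn (h.occ_init a) (h'.occ_init a)
    rw [h.occ_fp a 0 (by omega), h'.occ_fp a 0 (by omega)]
  | succ m ih =>
    intro h1 h2
    obtain ⟨ihoc, ihtr⟩ := ih (by omega) (by omega)
    have htr_new : tr (m+1) = tr' (m+1) := by
      apply hwin.isBP.unique
      · rw [h.tr_pre (m+1) (by omega) h1, h'.tr_pre (m+1) (by omega) h2]
        simp only [Nat.add_sub_cancel]
        rw [ihoc (mvA (m+1)), ihoc (mvB (m+1))]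
      · rw [h.tr_ft (m+1) (by omega) h1, h'.tr_ft (m+1) (by omega) h2]
    refine ⟨?_, ?_⟩
    · intro a
      by_cases hmov : isMover a (m+1)
      · have e1 := h.occ_post a (m+1) (by omega) h1 hmov
        have e2 := h'.occ_post a (m+1) (by omega) h2 hmov
        rw [← htr_new] at e2
        apply (hwin.isBP.hom.post_bij (tr (m+1))).injOn e1 e2
        rw [h.occ_fp a (m+1) h1, h'.occ_fp a (m+1) h2]
      · rw [h.occ_stable a m h1 hmov, h'.occ_stable a m h2 hmov, ihoc a]
    · intro τ hτ1 hτ2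
      by_cases hττ : τ = m+1
      · subst hττ; exact htr_new
      · exact ihtr τ hτ1 (by omega)

/-- Canonical transitions of the environment run of part `X`. -/
noncomputable def rTr (X : Bool) (τ : ℕ) : T := (runSpec_exists hwin X τ).choose τ

/-- Canonical occurrence places of the environment run of part `X`. -/
noncomputable def rOc (X : Bool) (a : Fin 3) (m : ℕ) : P :=
  (runSpec_exists hwin X m).choose_spec.choose a m

lemma rSpec (X : Bool) (n : ℕ) : RunSpec N fp ft X n (rTr hwin X) (rOc hwin X) := by
  have hspec : ∀ k, RunSpec N fp ft X k ((runSpec_exists hwin X k).choose)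
      ((runSpec_exists hwin X k).choose_spec.choose) :=
    fun k => (runSpec_exists hwin X k).choose_spec.choose_spec
  have hoc_eq : ∀ (k k' : ℕ) (a : Fin 3) (m : ℕ), m ≤ k → m ≤ k' →
      (runSpec_exists hwin X k).choose_spec.choose a m =
      (runSpec_exists hwin X k').choose_spec.choose a m :=
    fun k k' a m h1 h2 => (runSpec_agree hwin (hspec k) (hspec k') m h1 h2).1 a
  have htr_eq : ∀ (k k' τ : ℕ), 1 ≤ τ → τ ≤ k → τ ≤ k' →
      (runSpec_exists hwin X k).choose τ = (runSpec_exists hwin X k').choose τ :=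
    fun k k' τ h0 h1 h2 =>
      (runSpec_agree hwin (hspec k) (hspec k') (min k k') (min_le_left _ _)
        (min_le_right _ _)).2 τ h0 (le_min h1 h2)
  constructor
  · intro a m hm
    exact (hspec m).occ_fp a m (le_refl m)
  · intro a
    exact (hspec 0).occ_init a
  · intro a m hm hnm
    unfold rOc
    rw [(hspec (m+1)).occ_stable a m (le_refl _) hnm]
    exact hoc_eq (m+1) m a m (by omega) (le_refl m)
  · intro τ h1 h2
    unfold rTr rOc
    rw [(hspec τ).tr_pre τ h1 (le_refl τ)]
    rw [hoc_eq τ (τ-1) (mvA τ) (τ-1) (by omega) (le_refl _),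
        hoc_eq τ (τ-1) (mvB τ) (τ-1) (by omega) (le_refl _)]
  · intro τ h1 h2
    exact (hspec τ).tr_ft τ h1 (le_refl τ)
  · intro a m h1 h2 hmov
    exact (hspec m).occ_post a m h1 (le_refl m) hmov
  · intro a m hm v
    unfold rTr rOc
    rw [(hspec m).le_char a m (le_refl m) v]
    constructor
    · rintro ⟨j, hj1, hj2, rfl⟩
      refine ⟨j, hj1, hj2, ?_⟩
      exact htr_eq m j j hj1 (le_trans hj2 (lastMove_le a m)) (le_refl j)
    · rintro ⟨j, hj1, hj2, rfl⟩
      exact ⟨j, hj1, hj2, (htr_eq m j j hj1 (le_trans hj2 (lastMove_le a m)) (le_refl j)).symm⟩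
  · intro a m hm j h1 h2
    unfold rTr rOc
    have := (hspec m).not_consumed a m (le_refl m) j h1 h2
    rwa [htr_eq j m j h1 (le_refl j) h2]

end RunC
end PG
namespace PG
section CutR

open PreNet

variable {Col : Type} [Finite Col] {Ci : Set Col} {DP HP VP : Set (Col × Col)}
variable {P T : Type} {N : PreNet P T} {fp : P → CPPlace Col} {ft : T → CPTrans Col}

lemma fires_append {M M' M'' : Set P} {l l' : List T}
    (h : PreNet.Fires N M l M') (h' : PreNet.Fires N M' l' M'') :
    PreNet.Fires N M (l ++ l') M'' := by
  induction h with
  | nil M => exact h'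
  | cons he _ ih => exact PreNet.Fires.cons he (ih h')

variable (hwin : IsWinningStrategy (cpGame Col Ci DP HP VP) N fp ft)

/-- The marking of the strategy after `nT` top and `nB` bottom round transitions. -/
noncomputable def cutMk (nT nB : ℕ) : Set P :=
  {rOc hwin true 0 nT, rOc hwin true 1 nT, rOc hwin true 2 nT,
   rOc hwin false 0 nB, rOc hwin false 1 nB, rOc hwin false 2 nB}

include hwin

lemma rOc_fp (X : Bool) (a : Fin 3) (m : ℕ) :
    fp (rOc hwin X a m) = CPPlace.env X a (pIdx a m) :=
  (rSpec hwin X m).occ_fp a m (le_refl m)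

lemma rOc_ne_player {X : Bool} {a d : Fin 3} {m m' : ℕ} (h : a ≠ d) :
    rOc hwin X a m ≠ rOc hwin X d m' := by
  intro he
  have h1 := rOc_fp hwin X a m
  rw [he, rOc_fp hwin X d m'] at h1
  simp at h1
  exact h h1.1.symm

lemma rOc_ne_cross {a d : Fin 3} {m m' : ℕ} :
    rOc hwin true a m ≠ rOc hwin false d m' := by
  intro he
  have h1 := rOc_fp hwin true a m
  rw [he, rOc_fp hwin false d m'] at h1
  simp at h1

lemma cut_mem_top (nT nB : ℕ) (a : Fin 3) : rOc hwin true a nT ∈ cutMk hwin nT nB := by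
  fin_cases a <;> simp [cutMk]

lemma cut_mem_bot (nT nB : ℕ) (a : Fin 3) : rOc hwin false a nB ∈ cutMk hwin nT nB := by
  fin_cases a <;> simp [cutMk]

lemma rTr_post (X : Bool) (τ : ℕ) (h1 : 1 ≤ τ) :
    N.post (rTr hwin X τ) = {rOc hwin X (mvA τ) τ, rOc hwin X (mvB τ) τ} := by
  have hpost_bij : Set.BijOn fp (N.post (rTr hwin X τ)) ((cpNet Col).post (ft (rTr hwin X τ))) :=
    hwin.isBP.hom.post_bij _
  rw [(rSpec hwin X τ).tr_ft τ h1 (le_refl τ), post_labOf X τ h1] at hpost_bij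
  obtain ⟨wA, wB, hwne, hupost, hfwA, hfwB⟩ := bijOn_pair hpost_bij (by simp [mvA_ne_mvB τ])
  have hA : rOc hwin X (mvA τ) τ = wA := by
    apply hpost_bij.injOn _ (by rw [hupost]; left; rfl)
    · rw [rOc_fp hwin X (mvA τ) τ, hfwA]
    · exact (rSpec hwin X τ).occ_post (mvA τ) τ h1 (le_refl τ) (isMover_mvA τ h1)
  have hB : rOc hwin X (mvB τ) τ = wB := by
    apply hpost_bij.injOn _ (by rw [hupost]; right; rfl)
    · rw [rOc_fp hwin X (mvB τ) τ, hfwB]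
    · exact (rSpec hwin X τ).occ_post (mvB τ) τ h1 (le_refl τ) (isMover_mvB τ h1)
  rw [hupost, hA, hB]

lemma rOc_stable_of_nonmover (X : Bool) (a : Fin 3) (m : ℕ) (h : ¬ isMover a (m+1)) :
    rOc hwin X a (m+1) = rOc hwin X a m :=
  (rSpec hwin X (m+1)).occ_stable a m (le_refl _) h

lemma fire_cut_top (nT nB : ℕ) :
    N.enabled (cutMk hwin nT nB) (rTr hwin true (nT+1)) ∧
    N.fire (cutMk hwin nT nB) (rTr hwin true (nT+1)) = cutMk hwin (nT+1) nB := by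
  have hpre := (rSpec hwin true (nT+1)).tr_pre (nT+1) (by omega) (le_refl _)
  simp only [Nat.add_sub_cancel] at hpre
  have hpost := rTr_post hwin true (nT+1) (by omega)
  constructor
  · intro z hz
    rw [hpre] at hz
    rcases hz with rfl | rfl
    · exact cut_mem_top hwin nT nB _
    · exact cut_mem_top hwin nT nB _
  · unfold PreNet.fire
    rw [hpre, hpost]
    ext z
    constructor
    · rintro (⟨hz, hnz⟩ | hz)
      · -- old place not consumed
        simp only [Set.mem_insert_iff, Set.mem_singleton_iff] at hnz
        push_neg at hnz
        obtain ⟨hn1, hn2⟩ := hnz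
        rcases hz with rfl | rfl | rfl | rfl | rfl | rfl
        · -- top player 0
          by_cases hm : isMover 0 (nT+1)
          · rcases (isMover_iff_eq 0 (nT+1) (by omega)).mp hm with h | h
            · exact absurd (by rw [← h]) hn1
            · exact absurd (by rw [← h]) hn2
          · rw [← rOc_stable_of_nonmover hwin true 0 nT hm]
            exact cut_mem_top hwin (nT+1) nB 0
          all_goals {}
        · by_cases hm : isMover 1 (nT+1)
          · rcases (isMover_iff_eq 1 (nT+1) (by omega)).mp hm with h | h
            · exact absurd (by rw [← h]) hn1
            · exact absurd (by rw [← h]) hn2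
          · rw [← rOc_stable_of_nonmover hwin true 1 nT hm]
            exact cut_mem_top hwin (nT+1) nB 1
        · by_cases hm : isMover 2 (nT+1)
          · rcases (isMover_iff_eq 2 (nT+1) (by omega)).mp hm with h | h
            · exact absurd (by rw [← h]) hn1
            · exact absurd (by rw [← h]) hn2
          · rw [← rOc_stable_of_nonmover hwin true 2 nT hm]
            exact cut_mem_top hwin (nT+1) nB 2
        · exact cut_mem_bot hwin (nT+1) nB 0
        · exact cut_mem_bot hwin (nT+1) nB 1
        · exact cut_mem_bot hwin (nT+1) nB 2
      · rcases hz with rfl | rfl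
        · exact cut_mem_top hwin (nT+1) nB _
        · exact cut_mem_top hwin (nT+1) nB _
    · intro hz
      rcases hz with rfl | rfl | rfl | rfl | rfl | rfl
      · by_cases hm : isMover 0 (nT+1)
        · right
          rcases (isMover_iff_eq 0 (nT+1) (by omega)).mp hm with h | h
          · left; rw [← h]
          · right; rw [← h]; rfl
        · left
          rw [rOc_stable_of_nonmover hwin true 0 nT hm]
          refine ⟨cut_mem_top hwin nT nB 0, ?_⟩
          rintro (he | he)
          · exact (rOc_ne_player hwin (fun hc => hm (by rw [hc]; exact isMover_mvA (nT+1) (by omega)))) he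
          · exact (rOc_ne_player hwin (fun hc => hm (by rw [hc]; exact isMover_mvB (nT+1) (by omega)))) he
      · by_cases hm : isMover 1 (nT+1)
        · right
          rcases (isMover_iff_eq 1 (nT+1) (by omega)).mp hm with h | h
          · left; rw [← h]
          · right; rw [← h]; rfl
        · left
          rw [rOc_stable_of_nonmover hwin true 1 nT hm]
          refine ⟨cut_mem_top hwin nT nB 1, ?_⟩
          rintro (he | he)
          · exact (rOc_ne_player hwin (fun hc => hm (by rw [hc]; exact isMover_mvA (nT+1) (by omega)))) he
          · exact (rOc_ne_player hwin (fun hc => hm (by rw [hc]; exact isMover_mvB (nT+1) (by omega)))) he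
      · by_cases hm : isMover 2 (nT+1)
        · right
          rcases (isMover_iff_eq 2 (nT+1) (by omega)).mp hm with h | h
          · left; rw [← h]
          · right; rw [← h]; rfl
        · left
          rw [rOc_stable_of_nonmover hwin true 2 nT hm]
          refine ⟨cut_mem_top hwin nT nB 2, ?_⟩
          rintro (he | he)
          · exact (rOc_ne_player hwin (fun hc => hm (by rw [hc]; exact isMover_mvA (nT+1) (by omega)))) he
          · exact (rOc_ne_player hwin (fun hc => hm (by rw [hc]; exact isMover_mvB (nT+1) (by omega)))) he
      · refine Or.inl ⟨cut_mem_bot hwin nT nB 0, ?_⟩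
        rintro (he | he) <;> exact (rOc_ne_cross hwin) he.symm
      · refine Or.inl ⟨cut_mem_bot hwin nT nB 1, ?_⟩
        rintro (he | he) <;> exact (rOc_ne_cross hwin) he.symm
      · refine Or.inl ⟨cut_mem_bot hwin nT nB 2, ?_⟩
        rintro (he | he) <;> exact (rOc_ne_cross hwin) he.symm

end CutR
end PG
namespace PG
section CutR2

open PreNet

variable {Col : Type} [Finite Col] {Ci : Set Col} {DP HP VP : Set (Col × Col)}
variable {P T : Type} {N : PreNet P T} {fp : P → CPPlace Col} {ft : T → CPTrans Col}
variable (hwin : IsWinningStrategy (cpGame Col Ci DP HP VP) N fp ft)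
include hwin

lemma fire_cut_bot (nT nB : ℕ) :
    N.enabled (cutMk hwin nT nB) (rTr hwin false (nB+1)) ∧
    N.fire (cutMk hwin nT nB) (rTr hwin false (nB+1)) = cutMk hwin nT (nB+1) := by
  have hpre := (rSpec hwin false (nB+1)).tr_pre (nB+1) (by omega) (le_refl _)
  simp only [Nat.add_sub_cancel] at hpre
  have hpost := rTr_post hwin false (nB+1) (by omega)
  constructor
  · intro z hz
    rw [hpre] at hz
    rcases hz with rfl | rfl
    · exact cut_mem_bot hwin nT nB _
    · exact cut_mem_bot hwin nT nB _
  · unfold PreNet.fire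
    rw [hpre, hpost]
    ext z
    constructor
    · rintro (⟨hz, hnz⟩ | hz)
      · simp only [Set.mem_insert_iff, Set.mem_singleton_iff] at hnz
        push_neg at hnz
        obtain ⟨hn1, hn2⟩ := hnz
        rcases hz with rfl | rfl | rfl | rfl | rfl | rfl
        · exact cut_mem_top hwin nT (nB+1) 0
        · exact cut_mem_top hwin nT (nB+1) 1
        · exact cut_mem_top hwin nT (nB+1) 2
        · by_cases hm : isMover 0 (nB+1)
          · rcases (isMover_iff_eq 0 (nB+1) (by omega)).mp hm with h | h
            · exact absurd (by rw [← h]) hn1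
            · exact absurd (by rw [← h]) hn2
          · rw [← rOc_stable_of_nonmover hwin false 0 nB hm]
            exact cut_mem_bot hwin nT (nB+1) 0
        · by_cases hm : isMover 1 (nB+1)
          · rcases (isMover_iff_eq 1 (nB+1) (by omega)).mp hm with h | h
            · exact absurd (by rw [← h]) hn1
            · exact absurd (by rw [← h]) hn2
          · rw [← rOc_stable_of_nonmover hwin false 1 nB hm]
            exact cut_mem_bot hwin nT (nB+1) 1
        · by_cases hm : isMover 2 (nB+1)
          · rcases (isMover_iff_eq 2 (nB+1) (by omega)).mp hm with h | h
            · exact absurd (by rw [← h]) hn1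
            · exact absurd (by rw [← h]) hn2
          · rw [← rOc_stable_of_nonmover hwin false 2 nB hm]
            exact cut_mem_bot hwin nT (nB+1) 2
      · rcases hz with rfl | rfl
        · exact cut_mem_bot hwin nT (nB+1) _
        · exact cut_mem_bot hwin nT (nB+1) _
    · intro hz
      rcases hz with rfl | rfl | rfl | rfl | rfl | rfl
      · refine Or.inl ⟨cut_mem_top hwin nT nB 0, ?_⟩
        rintro (he | he) <;> exact (rOc_ne_cross hwin) he
      · refine Or.inl ⟨cut_mem_top hwin nT nB 1, ?_⟩
        rintro (he | he) <;> exact (rOc_ne_cross hwin) he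
      · refine Or.inl ⟨cut_mem_top hwin nT nB 2, ?_⟩
        rintro (he | he) <;> exact (rOc_ne_cross hwin) he
      · by_cases hm : isMover 0 (nB+1)
        · right
          rcases (isMover_iff_eq 0 (nB+1) (by omega)).mp hm with h | h
          · left; rw [← h]
          · right; rw [← h]; rfl
        · left
          rw [rOc_stable_of_nonmover hwin false 0 nB hm]
          refine ⟨cut_mem_bot hwin nT nB 0, ?_⟩
          rintro (he | he)
          · exact (rOc_ne_player hwin (fun hc => hm (by rw [hc]; exact isMover_mvA (nB+1) (by omega)))) he
          · exact (rOc_ne_player hwin (fun hc => hm (by rw [hc]; exact isMover_mvB (nB+1) (by omega)))) he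
      · by_cases hm : isMover 1 (nB+1)
        · right
          rcases (isMover_iff_eq 1 (nB+1) (by omega)).mp hm with h | h
          · left; rw [← h]
          · right; rw [← h]; rfl
        · left
          rw [rOc_stable_of_nonmover hwin false 1 nB hm]
          refine ⟨cut_mem_bot hwin nT nB 1, ?_⟩
          rintro (he | he)
          · exact (rOc_ne_player hwin (fun hc => hm (by rw [hc]; exact isMover_mvA (nB+1) (by omega)))) he
          · exact (rOc_ne_player hwin (fun hc => hm (by rw [hc]; exact isMover_mvB (nB+1) (by omega)))) he
      · by_cases hm : isMover 2 (nB+1)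
        · right
          rcases (isMover_iff_eq 2 (nB+1) (by omega)).mp hm with h | h
          · left; rw [← h]
          · right; rw [← h]; rfl
        · left
          rw [rOc_stable_of_nonmover hwin false 2 nB hm]
          refine ⟨cut_mem_bot hwin nT nB 2, ?_⟩
          rintro (he | he)
          · exact (rOc_ne_player hwin (fun hc => hm (by rw [hc]; exact isMover_mvA (nB+1) (by omega)))) he
          · exact (rOc_ne_player hwin (fun hc => hm (by rw [hc]; exact isMover_mvB (nB+1) (by omega)))) he

lemma init_eq_cut : N.init = cutMk hwin 0 0 := by
  apply Set.eq_of_subset_of_subset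
  · intro z hz
    have hfz := hwin.isBP.hom.init_bij.mapsTo hz
    obtain ⟨X, a, hXa⟩ := hfz
    have : z = rOc hwin X a 0 := by
      apply hwin.isBP.hom.init_bij.injOn hz ((rSpec hwin X 0).occ_init a)
      rw [hXa, rOc_fp hwin X a 0]
      simp [pIdx]
    rw [this]
    cases X
    · exact cut_mem_bot hwin 0 0 a
    · exact cut_mem_top hwin 0 0 a
  · intro z hz
    rcases hz with rfl | rfl | rfl | rfl | rfl | rfl
    · exact (rSpec hwin true 0).occ_init 0
    · exact (rSpec hwin true 0).occ_init 1
    · exact (rSpec hwin true 0).occ_init 2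
    · exact (rSpec hwin false 0).occ_init 0
    · exact (rSpec hwin false 0).occ_init 1
    · exact (rSpec hwin false 0).occ_init 2

lemma reach_cut (nT nB : ℕ) : ∃ l, PreNet.Fires N N.init l (cutMk hwin nT nB) := by
  induction nT with
  | zero =>
    induction nB with
    | zero => exact ⟨[], init_eq_cut hwin ▸ PreNet.Fires.nil N.init⟩
    | succ nB ih =>
      obtain ⟨l, hl⟩ := ih
      obtain ⟨hen, hfi⟩ := fire_cut_bot hwin 0 nB
      exact ⟨l ++ [rTr hwin false (nB+1)], fires_append hl
        (hfi ▸ PreNet.Fires.cons hen (PreNet.Fires.nil _))⟩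
  | succ nT ih =>
    obtain ⟨l, hl⟩ := ih
    obtain ⟨hen, hfi⟩ := fire_cut_top hwin nT nB
    exact ⟨l ++ [rTr hwin true (nT+1)], fires_append hl
      (hfi ▸ PreNet.Fires.cons hen (PreNet.Fires.nil _))⟩

end CutR2
end PG
namespace PG
section Uniq1

open PreNet

def nxtMv (e : Fin 3) (m : ℕ) : ℕ := if isMover e (m+1) then m+1 else m+2

lemma nxtMv_pos (e : Fin 3) (m : ℕ) : m < nxtMv e m := by unfold nxtMv; split <;> omega

lemma nxtMv_mover (e : Fin 3) (m : ℕ) : isMover e (nxtMv e m) := by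
  unfold nxtMv
  split
  · assumption
  · next h =>
    have he := e.2
    unfold isMover at h ⊢
    omega

lemma nxtMv_gap (e : Fin 3) (m τ : ℕ) (h1 : m < τ) (h2 : τ < nxtMv e m) : ¬ isMover e τ := by
  intro hm
  unfold nxtMv at h2
  split at h2
  · omega
  · next h =>
    have : τ = m + 1 := by omega
    subst this
    exact h hm

lemma canonical_lastMove (e : Fin 3) (m : ℕ) (h : m = 0 ∨ isMover e m) : lastMove e m = m := by
  rcases h with rfl | h
  · exact lastMove_zero e
  · exact lastMove_mover e m h

/-- Number of strict causal predecessors of a place. -/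
noncomputable def pastSize {P T : Type} (N : PreNet P T) (q : P) : ℕ :=
  Set.ncard {y : P ⊕ T | N.lt y (Sum.inl q)}

variable {Col : Type} [Finite Col] {Ci : Set Col} {DP HP VP : Set (Col × Col)}
variable {P T : Type} {N : PreNet P T} {fp : P → CPPlace Col} {ft : T → CPTrans Col}
variable (hwin : IsWinningStrategy (cpGame Col Ci DP HP VP) N fp ft)
include hwin

lemma pastSize_lt {z q : P} {w : T} (hz : z ∈ N.pre w) (hq : q ∈ N.post w) :
    pastSize N z < pastSize N q := by
  have hzw : N.lt (Sum.inl z) (Sum.inr w) :=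
    Relation.TransGen.single (show N.flow (Sum.inl z) (Sum.inr w) from hz)
  have hwq : N.lt (Sum.inr w) (Sum.inl q) :=
    Relation.TransGen.single (show N.flow (Sum.inr w) (Sum.inl q) from hq)
  have hfin : {y : P ⊕ T | N.lt y (Sum.inl q)}.Finite := by
    apply Set.Finite.subset (hwin.isBP.occ.finitely_preceded (Sum.inl q))
    intro y hy
    exact hy.to_reflTransGen
  apply Set.ncard_lt_ncard _ hfin
  constructor
  · intro y hy
    exact Relation.TransGen.trans hy (Relation.TransGen.trans hzw hwq)
  · intro hsub
    have h1 : Sum.inr w ∈ {y : P ⊕ T | N.lt y (Sum.inl q)} := hwq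
    have h2 := hsub h1
    exact hwin.isBP.occ.acyclic (Sum.inr w) (Relation.TransGen.trans (h2 : N.lt _ _) hzw)

lemma le_of_next_le {X : Bool} {e₁ e₂ : Fin 3} {m₁ m₂ : ℕ}
    (hc₂ : m₂ = 0 ∨ isMover e₂ m₂) (hmv : isMover e₁ (nxtMv e₁ m₁))
    (h : nxtMv e₁ m₁ ≤ m₂) :
    N.le (Sum.inl (rOc hwin X e₁ m₁)) (Sum.inl (rOc hwin X e₂ m₂)) := by
  set ν := nxtMv e₁ m₁ with hν
  have hν1 : 1 ≤ ν := by have := nxtMv_pos e₁ m₁; omega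
  have hm₂1 : 1 ≤ m₂ := le_trans hν1 h
  have hstab : rOc hwin X e₁ (ν-1) = rOc hwin X e₁ m₁ := by
    have := ((rSpec hwin X (ν-1)).oc_live e₁ m₁ (ν-1)
      (by have := nxtMv_pos e₁ m₁; omega) (le_refl _)
      (fun τ h1 h2 => nxtMv_gap e₁ m₁ τ h1 (by omega))).1
    exact this
  have hpre := (rSpec hwin X ν).tr_pre ν hν1 (le_refl ν)
  have hmem : rOc hwin X e₁ m₁ ∈ N.pre (rTr hwin X ν) := by
    rw [hpre, ← hstab]
    rcases (isMover_iff_eq e₁ ν hν1).mp hmv with hh | hh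
    · left; rw [hh]
    · right; rw [hh]; exact rfl
  have hle2 : N.le (Sum.inr (rTr hwin X ν)) (Sum.inl (rOc hwin X e₂ m₂)) := by
    apply ((rSpec hwin X m₂).le_char e₂ m₂ (le_refl m₂) _).mpr
    exact ⟨ν, hν1, by rw [canonical_lastMove e₂ m₂ hc₂]; exact h, rfl⟩
  exact Relation.ReflTransGen.head (show N.flow (Sum.inl (rOc hwin X e₁ m₁)) (Sum.inr (rTr hwin X ν)) from hmem) hle2

lemma canonical_coexist {X : Bool} {e₁ e₂ : Fin 3} {m₁ m₂ : ℕ} (hne : e₁ ≠ e₂)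
    (hc₁ : m₁ = 0 ∨ isMover e₁ m₁) (hc₂ : m₂ = 0 ∨ isMover e₂ m₂)
    (hconc : N.concurrent (Sum.inl (rOc hwin X e₁ m₁)) (Sum.inl (rOc hwin X e₂ m₂))) :
    m₂ < nxtMv e₁ m₁ ∧ m₁ < nxtMv e₂ m₂ ∧
    rOc hwin X e₁ (max m₁ m₂) = rOc hwin X e₁ m₁ ∧
    rOc hwin X e₂ (max m₁ m₂) = rOc hwin X e₂ m₂ := by
  have h1 : m₂ < nxtMv e₁ m₁ := by
    by_contra hcon
    push_neg at hcon
    exact hconc.1 (le_of_next_le hwin hc₂ (nxtMv_mover e₁ m₁) hcon)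
  have h2 : m₁ < nxtMv e₂ m₂ := by
    by_contra hcon
    push_neg at hcon
    exact hconc.2.1 (le_of_next_le hwin hc₁ (nxtMv_mover e₂ m₂) hcon)
  refine ⟨h1, h2, ?_, ?_⟩
  · exact ((rSpec hwin X (max m₁ m₂)).oc_live e₁ m₁ (max m₁ m₂)
      (le_max_left _ _) (le_refl _)
      (fun τ ha hb => nxtMv_gap e₁ m₁ τ ha (by omega))).1
  · exact ((rSpec hwin X (max m₁ m₂)).oc_live e₂ m₂ (max m₁ m₂)
      (le_max_right _ _) (le_refl _)
      (fun τ ha hb => nxtMv_gap e₂ m₂ τ ha (by omega))).1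

end Uniq1
end PG
namespace PG
section Uniq2

open PreNet

lemma sIdx_vals (m : ℕ) : sIdx m = 0 ∨ sIdx m = 2 ∨ sIdx m = 4 := by
  unfold sIdx
  split
  · left; rfl
  · split
    · right; left; rfl
    · right; right; rfl

lemma roundStart_vals (r : Fin 3) : roundStart r = 0 ∨ roundStart r = 2 ∨ roundStart r = 4 := by
  fin_cases r <;> simp [roundStart]

lemma nxt_even_ne {s t : Fin 6} (hs : s = 0 ∨ s = 2 ∨ s = 4) (ht : t = 0 ∨ t = 2 ∨ t = 4) :
    nxt s ≠ t := by
  rcases hs with rfl | rfl | rfl <;> rcases ht with rfl | rfl | rfl <;> decide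

lemma nxt_even_inj {s t : Fin 6} (hs : s = 0 ∨ s = 2 ∨ s = 4) (ht : t = 0 ∨ t = 2 ∨ t = 4)
    (h : nxt s = nxt t) : s = t := by
  rcases hs with rfl | rfl | rfl <;> rcases ht with rfl | rfl | rfl <;> first | rfl | (exfalso; exact absurd h (by decide))

lemma roundStart_inj {r r' : Fin 3} (h : roundStart r = roundStart r') : r = r' := by
  fin_cases r <;> fin_cases r' <;> first | rfl | (exfalso; revert h; decide)

lemma pIdx_mod1 (n : ℕ) (h : n % 3 = 1) :
    pIdx 0 n = nxt (sIdx (rdOf n)) ∧ pIdx 1 n = nxt (sIdx (rdOf n)) ∧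
    pIdx 2 n = sIdx (rdOf n) := by
  have h0 : ¬ (n = 0) := by omega
  refine ⟨?_, ?_, ?_⟩ <;> unfold pIdx <;> simp [h0, h]

lemma pIdx_mod2 (n : ℕ) (h : n % 3 = 2) :
    pIdx 0 n = nxt (sIdx (rdOf n)) ∧ pIdx 1 n = nxt (nxt (sIdx (rdOf n))) ∧
    pIdx 2 n = nxt (sIdx (rdOf n)) := by
  have h0 : ¬ (n = 0) := by omega
  refine ⟨?_, ?_, ?_⟩ <;> unfold pIdx <;> simp [h0, h]

variable {Col : Type} [Finite Col] {Ci : Set Col} {DP HP VP : Set (Col × Col)}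
variable {P T : Type} {N : PreNet P T} {fp : P → CPPlace Col} {ft : T → CPTrans Col}
variable (hwin : IsWinningStrategy (cpGame Col Ci DP HP VP) N fp ft)
include hwin

lemma canonical_step {X : Bool} {w : T} {e₁ e₂ : Fin 3} {n : ℕ}
    (hpre : N.pre w = {rOc hwin X e₁ n, rOc hwin X e₂ n})
    (hft : ft w = labOf Col X (n+1))
    (hmv : mvA (n+1) = e₁ ∧ mvB (n+1) = e₂) :
    w = rTr hwin X (n+1) := by
  apply hwin.isBP.unique
  · rw [hpre, (rSpec hwin X (n+1)).tr_pre (n+1) (by omega) (le_refl _)]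
    simp only [Nat.add_sub_cancel]
    rw [hmv.1, hmv.2]
  · rw [hft, (rSpec hwin X (n+1)).tr_ft (n+1) (by omega) (le_refl _)]

lemma env_place_canonical :
    ∀ (q : P) (X : Bool) (a : Fin 3) (i : Fin 6), fp q = CPPlace.env X a i →
    ∃ m, (m = 0 ∨ isMover a m) ∧ q = rOc hwin X a m := by
  suffices H : ∀ (sz : ℕ) (q : P) (X : Bool) (a : Fin 3) (i : Fin 6),
      pastSize N q = sz → fp q = CPPlace.env X a i →
      ∃ m, (m = 0 ∨ isMover a m) ∧ q = rOc hwin X a m by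
    intro q X a i hq
    exact H (pastSize N q) q X a i rfl hq
  intro sz
  induction sz using Nat.strong_induction_on with
  | _ sz IH =>
  intro q X a i hsz hq
  by_cases hprod : ∃ w, q ∈ N.post w
  · obtain ⟨w, hw⟩ := hprod
    obtain ⟨r, k, hft⟩ := post_round_label hwin hq hw
    have hpre_bij : Set.BijOn fp (N.pre w) ((cpNet Col).pre (ft w)) := hwin.isBP.hom.pre_bij w
    rw [hft] at hpre_bij
    have hIH : ∀ (z : P) (e : Fin 3) (ii : Fin 6), z ∈ N.pre w → fp z = CPPlace.env X e ii →
        ∃ m, (m = 0 ∨ isMover e m) ∧ z = rOc hwin X e m := by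
      intro z e ii hz hfz
      exact IH (pastSize N z) (by rw [← hsz]; exact pastSize_lt hwin hz hw) z X e ii rfl hfz
    -- common analysis producing the canonical places at a common cut
    have main : ∀ (p₁ p₂ : Fin 3) (i₁ i₂ : Fin 6), p₁ ≠ p₂ →
        (cpNet Col).pre (CPTrans.round X r k) =
          {CPPlace.env X p₁ i₁, CPPlace.env X p₂ i₂} →
        ∃ n, N.pre w = {rOc hwin X p₁ n, rOc hwin X p₂ n} ∧
          pIdx p₁ n = i₁ ∧ pIdx p₂ n = i₂ := by
      intro p₁ p₂ i₁ i₂ hpne hpre_eq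
      rw [hpre_eq] at hpre_bij
      obtain ⟨z₁, z₂, hzne, hprew, hfz₁, hfz₂⟩ := bijOn_pair hpre_bij (by simp [hpne])
      have hz₁mem : z₁ ∈ N.pre w := by rw [hprew]; left; rfl
      have hz₂mem : z₂ ∈ N.pre w := by rw [hprew]; right; rfl
      obtain ⟨m₁, hc₁, he₁⟩ := hIH z₁ p₁ i₁ hz₁mem hfz₁
      obtain ⟨m₂, hc₂, he₂⟩ := hIH z₂ p₂ i₂ hz₂mem hfz₂
      have hconc : N.concurrent (Sum.inl (rOc hwin X p₁ m₁)) (Sum.inl (rOc hwin X p₂ m₂)) := by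
        rw [← he₁, ← he₂]
        exact pre_concurrent hwin hz₁mem hz₂mem hzne
      obtain ⟨-, -, hst₁, hst₂⟩ := canonical_coexist hwin hpne hc₁ hc₂ hconc
      refine ⟨max m₁ m₂, ?_, ?_, ?_⟩
      · rw [hprew, he₁, he₂, hst₁, hst₂]
      · have := rOc_fp hwin X p₁ (max m₁ m₂)
        rw [hst₁, ← he₁, hfz₁] at this
        simp at this
        exact this.symm
      · have := rOc_fp hwin X p₂ (max m₁ m₂)
        rw [hst₂, ← he₂, hfz₂] at this
        simp at this
        exact this.symm
    -- now by cases on k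
    have hsv := sIdx_vals
    have hrv := roundStart_vals r
    have hconc : ∃ n, w = rTr hwin X (n+1) := by
      fin_cases k
      · -- k = 0 : players 0,1 at roundStart r
        obtain ⟨n, hpre, hi₁, hi₂⟩ := main 0 1 (roundStart r) (roundStart r)
          (by decide) cp_pre_round0
        have hn3 : n % 3 = 0 := by
          have h3 : n % 3 = 0 ∨ n % 3 = 1 ∨ n % 3 = 2 := by omega
          rcases h3 with h3 | h3 | h3
          · exact h3
          · exact absurd hi₁ (by rw [(pIdx_mod1 n h3).1]; exact nxt_even_ne (hsv _) hrv)
          · exact absurd hi₁ (by rw [(pIdx_mod2 n h3).1]; exact nxt_even_ne (hsv _) hrv)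
        have hs₀ : roundStart r = sIdx (rdOf (n+1)) := by
          rw [← hi₁, pIdx_mod0 0 n hn3]
        refine ⟨n, canonical_step hwin hpre ?_ ?_⟩
        · rw [labOf]
          have hk : kF (n+1) = 0 := by unfold kF; simp [(by omega : (n+1) % 3 = 1)]
          have hr : r = rIdxF (rdOf (n+1)) :=
            roundStart_inj (by rw [hs₀, roundStart_rIdxF])
          rw [hft, hk, ← hr]
          rfl
        · constructor <;>
            first
            | (unfold mvA; simp [(by omega : (n+1) % 3 = 1)])
            | (unfold mvB; simp [(by omega : (n+1) % 3 = 1)])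
      · -- k = 1 : players 1 at nxt s, 2 at s
        obtain ⟨n, hpre, hi₁, hi₂⟩ := main 1 2 (nxt (roundStart r)) (roundStart r)
          (by decide) cp_pre_round1
        have hn3 : n % 3 = 1 := by
          have h3 : n % 3 = 0 ∨ n % 3 = 1 ∨ n % 3 = 2 := by omega
          rcases h3 with h3 | h3 | h3
          · exfalso
            rw [pIdx_mod0 1 n h3] at hi₁
            exact (nxt_even_ne hrv (hsv _)) hi₁.symm
          · exact h3
          · exact absurd hi₂ (by rw [(pIdx_mod2 n h3).2.2]; exact nxt_even_ne (hsv _) hrv)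
        have hs₀ : roundStart r = sIdx (rdOf n) := by
          rw [← hi₂, (pIdx_mod1 n hn3).2.2]
        have hrd : rdOf (n+1) = rdOf n := by unfold rdOf; omega
        refine ⟨n, canonical_step hwin hpre ?_ ?_⟩
        · rw [labOf]
          have hk : kF (n+1) = 1 := by unfold kF; simp [(by omega : (n+1) % 3 = 2)]
          have hr : r = rIdxF (rdOf (n+1)) :=
            roundStart_inj (by rw [roundStart_rIdxF, hrd, ← hs₀])
          rw [hft, hk, ← hr]
          rfl
        · constructor <;>
            first
            | (unfold mvA; simp [(by omega : (n+1) % 3 = 2)])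
            | (unfold mvB; simp [(by omega : (n+1) % 3 = 2)])
      · -- k = 2 : players 2, 0 at nxt s
        obtain ⟨n, hpre, hi₁, hi₂⟩ := main 2 0 (nxt (roundStart r)) (nxt (roundStart r))
          (by decide) cp_pre_round2
        have hn3 : n % 3 = 2 := by
          have h3 : n % 3 = 0 ∨ n % 3 = 1 ∨ n % 3 = 2 := by omega
          rcases h3 with h3 | h3 | h3
          · exfalso
            rw [pIdx_mod0 0 n h3] at hi₂
            exact (nxt_even_ne hrv (hsv _)) hi₂.symm
          · exfalso
            rw [(pIdx_mod1 n h3).2.2] at hi₁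
            exact (nxt_even_ne hrv (hsv _)) hi₁.symm
          · exact h3
        have hs₀ : roundStart r = sIdx (rdOf n) := by
          apply nxt_even_inj hrv (hsv _)
          rw [← hi₁, (pIdx_mod2 n hn3).2.2]
        have hrd : rdOf (n+1) = rdOf n := by unfold rdOf; omega
        refine ⟨n, canonical_step hwin hpre ?_ ?_⟩
        · rw [labOf]
          have hk : kF (n+1) = 2 := by unfold kF; simp [(by omega : (n+1) % 3 = 0)]
          have hr : r = rIdxF (rdOf (n+1)) :=
            roundStart_inj (by rw [roundStart_rIdxF, hrd, ← hs₀])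
          rw [hft, hk, ← hr]
          rfl
        · constructor <;>
            first
            | (unfold mvA; simp [(by omega : (n+1) % 3 = 0)])
            | (unfold mvB; simp [(by omega : (n+1) % 3 = 0)])
    obtain ⟨n, hw_eq⟩ := hconc
    rw [hw_eq] at hw
    rw [rTr_post hwin X (n+1) (by omega)] at hw
    have key : ∀ e : Fin 3, isMover e (n+1) → q = rOc hwin X e (n+1) →
        ∃ m, (m = 0 ∨ isMover a m) ∧ q = rOc hwin X a m := by
      intro e hmov he
      have : a = e := by
        have h1 := rOc_fp hwin X e (n+1)
        rw [← he, hq] at h1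
        simp at h1
        exact h1.1
      subst this
      exact ⟨n+1, Or.inr hmov, he⟩
    rcases hw with he | he
    · exact key _ (isMover_mvA (n+1) (by omega)) he
    · exact key _ (isMover_mvB (n+1) (by omega)) he
  · -- initial place
    have hqinit : q ∈ N.init := by
      rw [hwin.isBP.occ.init_eq]
      intro t ht
      exact hprod ⟨t, ht⟩
    have hi0 : i = 0 := by
      have h1 := hwin.isBP.hom.init_bij.mapsTo hqinit
      rw [hq] at h1
      obtain ⟨Y, b, hYb⟩ := h1
      simp at hYb
      exact hYb.2.2
    refine ⟨0, Or.inl rfl, ?_⟩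
    apply hwin.isBP.hom.init_bij.injOn hqinit ((rSpec hwin X 0).occ_init a)
    rw [hq, rOc_fp hwin X a 0, hi0]
    simp [pIdx]

end Uniq2
end PG
namespace PG
section NodeM

open PreNet

def thrd (a d : Fin 3) : Fin 3 := ⟨(3 - a.1 - d.1) % 3, by omega⟩

lemma thrd_spec (a d : Fin 3) (h : a ≠ d) : thrd a d ≠ a ∧ thrd a d ≠ d ∧
    (∀ x : Fin 3, x = a ∨ x = d ∨ x = thrd a d) := by
  fin_cases a <;> fin_cases d <;> simp_all [thrd] <;> decide

lemma lastMove_canonical (e : Fin 3) (n : ℕ) :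
    lastMove e n = 0 ∨ isMover e (lastMove e n) := by
  by_cases h : isMover e n
  · right; rwa [lastMove_mover e n h]
  · have hl : lastMove e n = n - 1 := by unfold lastMove; simp [h]
    rcases Nat.lt_or_ge n 2 with h2 | h2
    · left; omega
    · right
      rw [hl]
      have : (n - 1) + 1 = n := by omega
      exact mover_pred e (n-1) (by omega) (by rwa [this])

variable {Col : Type} [Finite Col] {Ci : Set Col} {DP HP VP : Set (Col × Col)}
variable {P T : Type} {N : PreNet P T} {fp : P → CPPlace Col} {ft : T → CPTrans Col}

lemma ne_of_fp {x y : P} (h : fp x ≠ fp y) : x ≠ y := fun he => h (he ▸ rfl)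

lemma mem_fire_post {M : Set P} {t : T} {z : P} (h : z ∈ N.post t) : z ∈ N.fire M t :=
  Or.inr h

lemma mem_fire_keep {M : Set P} {t : T} {z : P} (h : z ∈ M) (h' : z ∉ N.pre t) :
    z ∈ N.fire M t := Or.inl ⟨h, h'⟩

variable (hwin : IsWinningStrategy (cpGame Col Ci DP HP VP) N fp ft)
include hwin

lemma check_post {u : T} {a : Fin 3} {j k : Fin 6} (hft : ft u = CPTrans.check a j k) :
    ∃ kp s, N.post u = {kp, s} ∧ fp kp = CPPlace.chk a j k ∧ fp s = CPPlace.sys a := by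
  have hb : Set.BijOn fp (N.post u) ((cpNet Col).post (ft u)) := hwin.isBP.hom.post_bij u
  rw [hft] at hb
  obtain ⟨kp, s, hne, hpost, h1, h2⟩ := bijOn_pair hb (by simp)
  exact ⟨kp, s, hpost, h1, h2⟩

lemma node_check (a : Fin 3) (jT jB : ℕ) :
    ∃ u, ft u = CPTrans.check a (pIdx a jT) (pIdx a jB) ∧
      N.pre u = {rOc hwin true a jT, rOc hwin false a jB} :=
  forced_check hwin (rOc_fp hwin true a jT) (rOc_fp hwin false a jB)

/-- The strategy allows colour `c` at the (unique) system place of the check of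
player `a` whose top/bottom occurrences are the canonical ones at move times
`jT`, `jB`. -/
def NodeCol (a : Fin 3) (jT jB : ℕ) (c : Col) : Prop :=
  ∃ u s σ, ft u = CPTrans.check a (pIdx a jT) (pIdx a jB) ∧
    N.pre u = {rOc hwin true a jT, rOc hwin false a jB} ∧
    s ∈ N.post u ∧ fp s = CPPlace.sys a ∧
    ft σ = CPTrans.colour a c ∧ N.pre σ = {s}

lemma colour_pre {σ : T} {a : Fin 3} {c : Col} {s : P} (hft : ft σ = CPTrans.colour a c)
    (hs : s ∈ N.pre σ) (hfs : fp s = CPPlace.sys a) : N.pre σ = {s} := by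
  have hb : Set.BijOn fp (N.pre σ) ((cpNet Col).pre (ft σ)) := hwin.isBP.hom.pre_bij σ
  rw [hft] at hb
  obtain ⟨z, hz, hfz⟩ := bijOn_single hb
  rw [hz]
  rw [hz] at hs
  rcases hs with rfl
  rfl

lemma nodeCol_unique {a : Fin 3} {jT jB : ℕ} {c c' : Col}
    (h : NodeCol hwin a jT jB c) (h' : NodeCol hwin a jT jB c') : c = c' := by
  obtain ⟨u, s, σ, hu1, hu2, hs1, hs2, hσ1, hσ2⟩ := h
  obtain ⟨u', s', σ', hu1', hu2', hs1', hs2', hσ1', hσ2'⟩ := h'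
  have huu : u = u' := hwin.isBP.unique u u' (by rw [hu2, hu2']) (by rw [hu1, hu1'])
  subst huu
  have hss : s = s' := by
    apply (hwin.isBP.hom.post_bij u).injOn hs1 hs1'
    rw [hs2, hs2']
  subst hss
  -- both colour transitions are enabled at a reachable marking containing s
  obtain ⟨l, hl⟩ := reach_cut hwin jT jB
  have hen : N.enabled (cutMk hwin jT jB) u := by
    intro z hz
    rw [hu2] at hz
    rcases hz with rfl | rfl
    · exact cut_mem_top hwin jT jB a
    · exact cut_mem_bot hwin jT jB a
  have hreach : N.reachable (N.fire (cutMk hwin jT jB) u) :=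
    ⟨l ++ [u], fires_append hl (PreNet.Fires.cons hen (PreNet.Fires.nil _))⟩
  have hsM : s ∈ N.fire (cutMk hwin jT jB) u := mem_fire_post hs1
  have hdet := hwin.determinism s (by rw [hs2]; exact ⟨a, rfl⟩) _ hreach hsM
  have hσσ : σ = σ' := by
    apply hdet
    · refine ⟨by rw [hσ2]; rfl, ?_⟩
      intro z hz
      rw [hσ2] at hz
      rcases hz with rfl
      exact hsM
    · refine ⟨by rw [hσ2']; rfl, ?_⟩
      intro z hz
      rw [hσ2'] at hz
      rcases hz with rfl
      exact hsM
  rw [hσσ, hσ1'] at hσ1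
  simp at hσ1
  exact hσ1.symm

end NodeM
end PG
namespace PG
section Med

open PreNet

variable {Col : Type} [Finite Col] {Ci : Set Col} {DP HP VP : Set (Col × Col)}
variable {P T : Type} {N : PreNet P T} {fp : P → CPPlace Col} {ft : T → CPTrans Col}
variable (hwin : IsWinningStrategy (cpGame Col Ci DP HP VP) N fp ft)
include hwin

lemma med {a d : Fin 3} {jT jB mT mB : ℕ} {c : Col} (hne : a ≠ d)
    (hlaT : ∀ τ, jT < τ → τ ≤ max jT mT → ¬ isMover a τ)
    (hldT : ∀ τ, mT < τ → τ ≤ max jT mT → ¬ isMover d τ)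
    (hlaB : ∀ τ, jB < τ → τ ≤ max jB mB → ¬ isMover a τ)
    (hldB : ∀ τ, mB < τ → τ ≤ max jB mB → ¬ isMover d τ)
    (hsrT : sameRound (pIdx a jT) (pIdx d mT))
    (hsrB : sameRound (pIdx a jB) (pIdx d mB))
    (h : NodeCol hwin a jT jB c) : NodeCol hwin d mT mB c := by
  classical
  set nT := max jT mT with hnT
  set nB := max jB mB with hnB
  have hsa_T : rOc hwin true a nT = rOc hwin true a jT :=
    ((rSpec hwin true nT).oc_live a jT nT (le_max_left _ _) (le_refl _) hlaT).1
  have hsd_T : rOc hwin true d nT = rOc hwin true d mT :=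
    ((rSpec hwin true nT).oc_live d mT nT (le_max_right _ _) (le_refl _) hldT).1
  have hsa_B : rOc hwin false a nB = rOc hwin false a jB :=
    ((rSpec hwin false nB).oc_live a jB nB (le_max_left _ _) (le_refl _) hlaB).1
  have hsd_B : rOc hwin false d nB = rOc hwin false d mB :=
    ((rSpec hwin false nB).oc_live d mB nB (le_max_right _ _) (le_refl _) hldB).1
  obtain ⟨hea, hed, henum⟩ := thrd_spec a d hne
  set e := thrd a d with he
  set eT := lastMove e nT with heT
  set eB := lastMove e nB with heB
  have hse_T : rOc hwin true e nT = rOc hwin true e eT :=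
    (rSpec hwin true nT).oc_eq_lastMove e nT (le_refl _)
  have hse_B : rOc hwin false e nB = rOc hwin false e eB :=
    (rSpec hwin false nB).oc_eq_lastMove e nB (le_refl _)
  obtain ⟨u₁, s₁, σ₁, hu₁ft, hu₁pre, hs₁post, hs₁fp, hσ₁ft, hσ₁pre⟩ := h
  obtain ⟨u₂, hu₂ft, hu₂pre⟩ := node_check hwin d mT mB
  obtain ⟨u₃, hu₃ft, hu₃pre⟩ := node_check hwin e eT eB
  have hu₁pre' : N.pre u₁ = {rOc hwin true a nT, rOc hwin false a nB} := by
    rw [hu₁pre, hsa_T, hsa_B]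
  have hu₂pre' : N.pre u₂ = {rOc hwin true d nT, rOc hwin false d nB} := by
    rw [hu₂pre, hsd_T, hsd_B]
  have hu₃pre' : N.pre u₃ = {rOc hwin true e nT, rOc hwin false e nB} := by
    rw [hu₃pre, hse_T, hse_B]
  obtain ⟨k₁, s₁', hpost₁, hk₁fp, hs₁'fp⟩ := check_post hwin hu₁ft
  have hss₁ : s₁' = s₁ := by
    apply (hwin.isBP.hom.post_bij u₁).injOn (by rw [hpost₁]; right; rfl) hs₁post
    rw [hs₁fp, hs₁'fp]
  rw [hss₁] at hpost₁ hs₁'fp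
  obtain ⟨k₂, s₂, hpost₂, hk₂fp, hs₂fp⟩ := check_post hwin hu₂ft
  obtain ⟨k₃, s₃, hpost₃, hk₃fp, hs₃fp⟩ := check_post hwin hu₃ft
  -- markings
  obtain ⟨l, hl⟩ := reach_cut hwin nT nB
  set M₀ := cutMk hwin nT nB with hM₀
  set M₁ := N.fire M₀ u₁ with hM₁
  set M₂ := N.fire M₁ u₂ with hM₂
  set M₃ := N.fire M₂ u₃ with hM₃
  set M₄ := N.fire M₃ σ₁ with hM₄
  -- helper: labels
  have henv_ne_sys : ∀ (X : Bool) (x : Fin 3) (m : ℕ) (g : Fin 3) (z : P),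
      fp z = CPPlace.sys g → rOc hwin X x m ≠ z := by
    intro X x m g z hz hc
    rw [← hc, rOc_fp hwin X x m] at hz
    simp at hz
  have henv_ne_chk : ∀ (X : Bool) (x : Fin 3) (m : ℕ) (g : Fin 3) (j k : Fin 6) (z : P),
      fp z = CPPlace.chk g j k → rOc hwin X x m ≠ z := by
    intro X x m g j k z hz hc
    rw [← hc, rOc_fp hwin X x m] at hz
    simp at hz
  -- enabledness of the three checks
  have hen₁ : N.enabled M₀ u₁ := by
    rw [PreNet.enabled, hu₁pre']
    rintro z (rfl | rfl)
    · exact cut_mem_top hwin nT nB a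
    · exact cut_mem_bot hwin nT nB a
  have hen₂ : N.enabled M₁ u₂ := by
    rw [PreNet.enabled, hu₂pre']
    rintro z (rfl | rfl)
    · apply mem_fire_keep (cut_mem_top hwin nT nB d)
      rw [hu₁pre']
      rintro (he' | he')
      · exact rOc_ne_player hwin hne.symm he'
      · exact rOc_ne_cross hwin he'
    · apply mem_fire_keep (cut_mem_bot hwin nT nB d)
      rw [hu₁pre']
      rintro (he' | he')
      · exact (rOc_ne_cross hwin) he'.symm
      · exact rOc_ne_player hwin hne.symm he'
  have hen₃ : N.enabled M₂ u₃ := by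
    rw [PreNet.enabled, hu₃pre']
    rintro z (rfl | rfl)
    · apply mem_fire_keep
      · apply mem_fire_keep (cut_mem_top hwin nT nB e)
        rw [hu₁pre']
        rintro (he' | he')
        · exact rOc_ne_player hwin hea he'
        · exact rOc_ne_cross hwin he'
      · rw [hu₂pre']
        rintro (he' | he')
        · exact rOc_ne_player hwin hed he'
        · exact rOc_ne_cross hwin he'
    · apply mem_fire_keep
      · apply mem_fire_keep (cut_mem_bot hwin nT nB e)
        rw [hu₁pre']
        rintro (he' | he')
        · exact (rOc_ne_cross hwin) he'.symm
        · exact rOc_ne_player hwin hea he'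
      · rw [hu₂pre']
        rintro (he' | he')
        · exact (rOc_ne_cross hwin) he'.symm
        · exact rOc_ne_player hwin hed he'
  -- s₁ survives to M₃
  have hs₁M₃ : s₁ ∈ M₃ := by
    apply mem_fire_keep
    · apply mem_fire_keep (mem_fire_post hs₁post)
      rw [hu₂pre']
      rintro (he' | he')
      · exact (henv_ne_sys true d nT a s₁ hs₁fp) he'.symm
      · exact (henv_ne_sys false d nB a s₁ hs₁fp) he'.symm
    · rw [hu₃pre']
      rintro (he' | he')
      · exact (henv_ne_sys true e nT a s₁ hs₁fp) he'.symm
      · exact (henv_ne_sys false e nB a s₁ hs₁fp) he'.symm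
  have henσ₁ : N.enabled M₃ σ₁ := by
    rw [PreNet.enabled, hσ₁pre]
    rintro z rfl
    exact hs₁M₃
  obtain ⟨o₁, hpostσ₁, ho₁fp⟩ := bijOn_single (by
    have hb : Set.BijOn fp (N.post σ₁) ((cpNet Col).post (ft σ₁)) := hwin.isBP.hom.post_bij σ₁
    rw [hσ₁ft] at hb
    exact hb)
  -- consumption of the cut
  have hcons : ∀ z ∈ M₀, z ∈ N.pre u₁ ∨ z ∈ N.pre u₂ ∨ z ∈ N.pre u₃ := by
    have hT : ∀ x : Fin 3, rOc hwin true x nT ∈ N.pre u₁ ∨ rOc hwin true x nT ∈ N.pre u₂ ∨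
        rOc hwin true x nT ∈ N.pre u₃ := by
      intro x
      rcases henum x with rfl | rfl | rfl
      · left; rw [hu₁pre']; left; rfl
      · right; left; rw [hu₂pre']; left; rfl
      · right; right; rw [hu₃pre']; left; rfl
    have hB : ∀ x : Fin 3, rOc hwin false x nB ∈ N.pre u₁ ∨ rOc hwin false x nB ∈ N.pre u₂ ∨
        rOc hwin false x nB ∈ N.pre u₃ := by
      intro x
      rcases henum x with rfl | rfl | rfl
      · left; rw [hu₁pre']; right; rfl
      · right; left; rw [hu₂pre']; right; rfl
      · right; right; rw [hu₃pre']; right; rfl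
    rintro z (rfl | rfl | rfl | rfl | rfl | rfl)
    · exact hT 0
    · exact hT 1
    · exact hT 2
    · exact hB 0
    · exact hB 1
    · exact hB 2
  have hM₃sub : ∀ z ∈ M₃, z = k₁ ∨ z = s₁ ∨ z = k₂ ∨ z = s₂ ∨ z = k₃ ∨ z = s₃ := by
    intro z hz
    rcases hz with ⟨hz₂, hnz₃⟩ | hz₃
    · rcases hz₂ with ⟨hz₁, hnz₂⟩ | hz₂'
      · rcases hz₁ with ⟨hz₀, hnz₁⟩ | hz₁'
        · rcases hcons z hz₀ with hc | hc | hc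
          · exact absurd hc hnz₁
          · exact absurd hc hnz₂
          · exact absurd hc hnz₃
        · rw [hpost₁] at hz₁'
          rcases hz₁' with rfl | rfl
          · exact Or.inl rfl
          · exact Or.inr (Or.inl rfl)
      · rw [hpost₂] at hz₂'
        rcases hz₂' with rfl | rfl
        · exact Or.inr (Or.inr (Or.inl rfl))
        · exact Or.inr (Or.inr (Or.inr (Or.inl rfl)))
    · rw [hpost₃] at hz₃
      rcases hz₃ with rfl | rfl
      · exact Or.inr (Or.inr (Or.inr (Or.inr (Or.inl rfl))))
      · exact Or.inr (Or.inr (Or.inr (Or.inr (Or.inr rfl))))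
  have hM₄sub : ∀ z ∈ M₄, z = k₁ ∨ z = k₂ ∨ z = s₂ ∨ z = k₃ ∨ z = s₃ ∨ z = o₁ := by
    intro z hz
    rcases hz with ⟨hz₃, hnzσ⟩ | hzσ
    · rw [hσ₁pre] at hnzσ
      rcases hM₃sub z hz₃ with rfl | rfl | rfl | rfl | rfl | rfl
      · exact Or.inl rfl
      · exact absurd rfl hnzσ
      · exact Or.inr (Or.inl rfl)
      · exact Or.inr (Or.inr (Or.inl rfl))
      · exact Or.inr (Or.inr (Or.inr (Or.inl rfl)))
      · exact Or.inr (Or.inr (Or.inr (Or.inr (Or.inl rfl))))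
    · rw [hpostσ₁] at hzσ
      rcases hzσ with rfl
      exact Or.inr (Or.inr (Or.inr (Or.inr (Or.inr rfl))))
  -- Fires up to M₄
  have hF₄ : PreNet.Fires N N.init (l ++ [u₁, u₂, u₃, σ₁]) M₄ :=
    fires_append hl (PreNet.Fires.cons hen₁ (PreNet.Fires.cons hen₂
      (PreNet.Fires.cons hen₃ (PreNet.Fires.cons henσ₁ (PreNet.Fires.nil _)))))
  have hreach₄ : N.reachable M₄ := ⟨_, hF₄⟩
  have hs₂dne : s₂ ≠ s₁ := ne_of_fp (fp := fp) (by rw [hs₂fp, hs₁fp]; simp; exact fun hh => hne hh.symm)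
  have hs₃ane : s₃ ≠ s₁ := ne_of_fp (fp := fp) (by rw [hs₃fp, hs₁fp]; simp; exact fun hh => hea hh)
  have hs₂M₄ : s₂ ∈ M₄ := by
    apply mem_fire_keep
    · apply mem_fire_keep (mem_fire_post (by rw [hpost₂]; right; rfl))
      rw [hu₃pre']
      rintro (he' | he')
      · exact (henv_ne_sys true e nT d s₂ hs₂fp) he'.symm
      · exact (henv_ne_sys false e nB d s₂ hs₂fp) he'.symm
    · rw [hσ₁pre]
      rintro he'
      exact hs₂dne he'
  have hs₃M₄ : s₃ ∈ M₄ := by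
    apply mem_fire_keep (mem_fire_post (by rw [hpost₃]; right; rfl))
    rw [hσ₁pre]
    rintro he'
    exact hs₃ane he'
  have hk₁M₄ : k₁ ∈ M₄ := by
    apply mem_fire_keep
    · apply mem_fire_keep
      · apply mem_fire_keep (mem_fire_post (by rw [hpost₁]; left; rfl))
        rw [hu₂pre']
        rintro (he' | he')
        · exact (henv_ne_chk true d nT a _ _ k₁ hk₁fp) he'.symm
        · exact (henv_ne_chk false d nB a _ _ k₁ hk₁fp) he'.symm
      · rw [hu₃pre']
        rintro (he' | he')
        · exact (henv_ne_chk true e nT a _ _ k₁ hk₁fp) he'.symm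
        · exact (henv_ne_chk false e nB a _ _ k₁ hk₁fp) he'.symm
    · rw [hσ₁pre]
      rintro he'
      exact (ne_of_fp (fp := fp) (by rw [hk₁fp, hs₁fp]; simp)) he'
  have hk₂M₄ : k₂ ∈ M₄ := by
    apply mem_fire_keep
    · apply mem_fire_keep (mem_fire_post (by rw [hpost₂]; left; rfl))
      rw [hu₃pre']
      rintro (he' | he')
      · exact (henv_ne_chk true e nT d _ _ k₂ hk₂fp) he'.symm
      · exact (henv_ne_chk false e nB d _ _ k₂ hk₂fp) he'.symm
    · rw [hσ₁pre]
      rintro he'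
      exact (ne_of_fp (fp := fp) (by rw [hk₂fp, hs₁fp]; simp)) he'
  have ho₁M₄ : o₁ ∈ M₄ := mem_fire_post (by rw [hpostσ₁]; rfl)
  -- generic analysis of enabled transitions at a colour-only marking
  have hana : ∀ (M' : Set P),
      (∀ z ∈ M', ∀ g : Fin 3, fp z = CPPlace.sys g → (z = s₂ ∧ g = d) ∨ (z = s₃ ∧ g = e)) →
      (∀ z ∈ M', ∀ (Y : Bool) (x : Fin 3) (i : Fin 6), fp z ≠ CPPlace.env Y x i) →
      ∀ v, N.enabled M' v →
        (∃ c₂, ft v = CPTrans.colour d c₂ ∧ N.pre v = {s₂}) ∨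
        (∃ c₃, ft v = CPTrans.colour e c₃ ∧ N.pre v = {s₃}) := by
    intro M' hsys henv v hen
    obtain ⟨z₀, hz₀⟩ := hwin.isBP.occ.toIsPetriNet.pre_nonempty v
    have hz₀M := hen hz₀
    have hfz₀ := fp_pre hwin hz₀
    rcases hftv : ft v with ⟨Y, r, k⟩ | ⟨g, j', k'⟩ | ⟨g, c'⟩ <;> rw [hftv] at hfz₀
    · obtain ⟨x, i, hx⟩ := mem_pre_round hfz₀
      exact absurd hx (henv z₀ hz₀M Y x i)
    · rcases mem_pre_check hfz₀ with hx | hx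
      · exact absurd hx (henv z₀ hz₀M true g j')
      · exact absurd hx (henv z₀ hz₀M false g k')
    · have hfz₀' : fp z₀ = CPPlace.sys g := hfz₀
      rcases hsys z₀ hz₀M g hfz₀' with ⟨rfl, rfl⟩ | ⟨rfl, rfl⟩
      · exact Or.inl ⟨c', rfl, colour_pre hwin hftv hz₀ hfz₀'⟩
      · exact Or.inr ⟨c', rfl, colour_pre hwin hftv hz₀ hfz₀'⟩
  have hsys₄ : ∀ z ∈ M₄, ∀ g : Fin 3, fp z = CPPlace.sys g →
      (z = s₂ ∧ g = d) ∨ (z = s₃ ∧ g = e) := by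
    intro z hzM g hg
    rcases hM₄sub z hzM with rfl | rfl | rfl | rfl | rfl | rfl
    · rw [hk₁fp] at hg; simp at hg
    · rw [hk₂fp] at hg; simp at hg
    · rw [hs₂fp] at hg; simp at hg; exact Or.inl ⟨rfl, hg.symm⟩
    · rw [hk₃fp] at hg; simp at hg
    · rw [hs₃fp] at hg; simp at hg; exact Or.inr ⟨rfl, hg.symm⟩
    · rw [ho₁fp] at hg; simp at hg
  have henv₄ : ∀ z ∈ M₄, ∀ (Y : Bool) (x : Fin 3) (i : Fin 6),
      fp z ≠ CPPlace.env Y x i := by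
    intro z hzM Y x i
    rcases hM₄sub z hzM with rfl | rfl | rfl | rfl | rfl | rfl <;>
      first
      | (rw [hk₁fp]; simp)
      | (rw [hk₂fp]; simp)
      | (rw [hs₂fp]; simp)
      | (rw [hk₃fp]; simp)
      | (rw [hs₃fp]; simp)
      | (rw [ho₁fp]; simp)
  -- common final step
  have tail : ∀ (Mp : Set P), N.reachable Mp → k₁ ∈ Mp → k₂ ∈ Mp → o₁ ∈ Mp → s₂ ∈ Mp →
      ∀ (σ₂ : T) (c₂ : Col), ft σ₂ = CPTrans.colour d c₂ → N.pre σ₂ = {s₂} →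
      NodeCol hwin d mT mB c := by
    intro Mp hreachp hk₁p hk₂p ho₁p hs₂p σ₂ c₂ hσ₂ft hσ₂pre
    obtain ⟨o₂, hpostσ₂, ho₂fp⟩ := bijOn_single (by
      have hb : Set.BijOn fp (N.post σ₂) ((cpNet Col).post (ft σ₂)) := hwin.isBP.hom.post_bij σ₂
      rw [hσ₂ft] at hb
      exact hb)
    have henσ₂ : N.enabled Mp σ₂ := by
      rw [PreNet.enabled, hσ₂pre]
      rintro z rfl
      exact hs₂p
    obtain ⟨lp, hlp⟩ := hreachp
    have hreachf : N.reachable (N.fire Mp σ₂) :=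
      ⟨lp ++ [σ₂], fires_append hlp (PreNet.Fires.cons henσ₂ (PreNet.Fires.nil _))⟩
    have hk₁f : k₁ ∈ N.fire Mp σ₂ := by
      apply mem_fire_keep hk₁p
      rw [hσ₂pre]
      rintro he'
      exact (ne_of_fp (fp := fp) (by rw [hk₁fp, hs₂fp]; simp)) he'
    have hk₂f : k₂ ∈ N.fire Mp σ₂ := by
      apply mem_fire_keep hk₂p
      rw [hσ₂pre]
      rintro he'
      exact (ne_of_fp (fp := fp) (by rw [hk₂fp, hs₂fp]; simp)) he'
    have ho₁f : o₁ ∈ N.fire Mp σ₂ := by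
      apply mem_fire_keep ho₁p
      rw [hσ₂pre]
      rintro he'
      exact (ne_of_fp (fp := fp) (by rw [ho₁fp, hs₂fp]; simp)) he'
    have ho₂f : o₂ ∈ N.fire Mp σ₂ := mem_fire_post (by rw [hpostσ₂]; rfl)
    have hceq : c = c₂ := by
      by_contra hcc
      apply hwin.safety _ hreachf
      exact Or.inl ⟨a, d, pIdx a jT, pIdx a jB, pIdx d mT, pIdx d mB, c, c₂,
        ⟨k₁, hk₁f, hk₁fp⟩, ⟨k₂, hk₂f, hk₂fp⟩, ⟨o₁, ho₁f, ho₁fp⟩, ⟨o₂, ho₂f, ho₂fp⟩,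
        Or.inl ⟨hsrT, hsrB, hcc⟩⟩
    refine ⟨u₂, s₂, σ₂, hu₂ft, hu₂pre, by rw [hpost₂]; right; rfl, hs₂fp, ?_, hσ₂pre⟩
    rw [hσ₂ft, hceq]
  -- deadlock avoidance at M₄
  have hproj₄ : (cpGame Col Ci DP HP VP).net.enabled (fp '' M₄) (CPTrans.colour d c) := by
    rintro z hz
    rcases hz with rfl
    exact ⟨s₂, hs₂M₄, hs₂fp⟩
  obtain ⟨v, hv⟩ := hwin.deadlock_avoiding M₄ hreach₄ ⟨_, hproj₄⟩
  rcases hana M₄ hsys₄ henv₄ v hv with ⟨c₂, hft₂, hpre₂c⟩ | ⟨c₃, hft₃, hpre₃c⟩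
  · exact tail M₄ hreach₄ hk₁M₄ hk₂M₄ ho₁M₄ hs₂M₄ v c₂ hft₂ hpre₂c
  · -- first fire the colour of the third player, then repeat
    set M₅ := N.fire M₄ v with hM₅
    obtain ⟨o₃, hpostσ₃, ho₃fp⟩ := bijOn_single (by
      have hb : Set.BijOn fp (N.post v) ((cpNet Col).post (ft v)) := hwin.isBP.hom.post_bij v
      rw [hft₃] at hb
      exact hb)
    have hreach₅ : N.reachable M₅ :=
      ⟨(l ++ [u₁, u₂, u₃, σ₁]) ++ [v], fires_append hF₄
        (PreNet.Fires.cons hv (PreNet.Fires.nil _))⟩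
    have hs₂M₅ : s₂ ∈ M₅ := by
      apply mem_fire_keep hs₂M₄
      rw [hpre₃c]
      rintro he'
      exact (ne_of_fp (fp := fp) (by rw [hs₂fp, hs₃fp]; simp; exact fun hh => hed hh.symm)) he'
    have hk₁M₅ : k₁ ∈ M₅ := by
      apply mem_fire_keep hk₁M₄
      rw [hpre₃c]
      rintro he'
      exact (ne_of_fp (fp := fp) (by rw [hk₁fp, hs₃fp]; simp)) he'
    have hk₂M₅ : k₂ ∈ M₅ := by
      apply mem_fire_keep hk₂M₄
      rw [hpre₃c]
      rintro he'
      exact (ne_of_fp (fp := fp) (by rw [hk₂fp, hs₃fp]; simp)) he'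
    have ho₁M₅ : o₁ ∈ M₅ := by
      apply mem_fire_keep ho₁M₄
      rw [hpre₃c]
      rintro he'
      exact (ne_of_fp (fp := fp) (by rw [ho₁fp, hs₃fp]; simp)) he'
    have hs₃M₅ : s₃ ∉ M₅ := by
      rintro (⟨-, hni⟩ | hin)
      · rw [hpre₃c] at hni
        exact hni rfl
      · rw [hpostσ₃] at hin
        exact (ne_of_fp (fp := fp) (by rw [hs₃fp, ho₃fp]; simp)) hin
    have hM₅sub : ∀ z ∈ M₅, z = k₁ ∨ z = k₂ ∨ z = s₂ ∨ z = k₃ ∨ z = s₃ ∨ z = o₁ ∨ z = o₃ := by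
      intro z hz
      rcases hz with ⟨hz₄, -⟩ | hzσ
      · rcases hM₄sub z hz₄ with h' | h' | h' | h' | h' | h'
        · exact Or.inl h'
        · exact Or.inr (Or.inl h')
        · exact Or.inr (Or.inr (Or.inl h'))
        · exact Or.inr (Or.inr (Or.inr (Or.inl h')))
        · exact Or.inr (Or.inr (Or.inr (Or.inr (Or.inl h'))))
        · exact Or.inr (Or.inr (Or.inr (Or.inr (Or.inr (Or.inl h')))))
      · rw [hpostσ₃] at hzσ
        rcases hzσ with rfl
        exact Or.inr (Or.inr (Or.inr (Or.inr (Or.inr (Or.inr rfl)))))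
    have hsys₅ : ∀ z ∈ M₅, ∀ g : Fin 3, fp z = CPPlace.sys g →
        (z = s₂ ∧ g = d) ∨ (z = s₃ ∧ g = e) := by
      intro z hzM g hg
      rcases hM₅sub z hzM with rfl | rfl | rfl | rfl | rfl | rfl | rfl
      · rw [hk₁fp] at hg; simp at hg
      · rw [hk₂fp] at hg; simp at hg
      · rw [hs₂fp] at hg; simp at hg; exact Or.inl ⟨rfl, hg.symm⟩
      · rw [hk₃fp] at hg; simp at hg
      · rw [hs₃fp] at hg; simp at hg; exact Or.inr ⟨rfl, hg.symm⟩
      · rw [ho₁fp] at hg; simp at hg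
      · rw [ho₃fp] at hg; simp at hg
    have henv₅ : ∀ z ∈ M₅, ∀ (Y : Bool) (x : Fin 3) (i : Fin 6),
        fp z ≠ CPPlace.env Y x i := by
      intro z hzM Y x i
      rcases hM₅sub z hzM with rfl | rfl | rfl | rfl | rfl | rfl | rfl <;>
        first
        | (rw [hk₁fp]; simp)
        | (rw [hk₂fp]; simp)
        | (rw [hs₂fp]; simp)
        | (rw [hk₃fp]; simp)
        | (rw [hs₃fp]; simp)
        | (rw [ho₁fp]; simp)
        | (rw [ho₃fp]; simp)
    have hproj₅ : (cpGame Col Ci DP HP VP).net.enabled (fp '' M₅) (CPTrans.colour d c) := by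
      rintro z hz
      rcases hz with rfl
      exact ⟨s₂, hs₂M₅, hs₂fp⟩
    obtain ⟨v', hv'⟩ := hwin.deadlock_avoiding M₅ hreach₅ ⟨_, hproj₅⟩
    rcases hana M₅ hsys₅ henv₅ v' hv' with ⟨c₂, hft₂, hpre₂c⟩ | ⟨c₃', hft₃', hpre₃c'⟩
    · exact tail M₅ hreach₅ hk₁M₅ hk₂M₅ ho₁M₅ hs₂M₅ v' c₂ hft₂ hpre₂c
    · exfalso
      apply hs₃M₅
      apply hv'
      rw [hpre₃c']
      rfl

end Med
end PG
namespace PG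
section Chain1

open PreNet

lemma mover0 (τ : ℕ) : isMover 0 τ ↔ (1 ≤ τ ∧ (τ % 3 = 1 ∨ τ % 3 = 0)) := by
  unfold isMover; simp <;> omega

lemma mover1 (τ : ℕ) : isMover 1 τ ↔ (1 ≤ τ ∧ (τ % 3 = 1 ∨ τ % 3 = 2)) := by
  unfold isMover; simp <;> omega

lemma mover2 (τ : ℕ) : isMover 2 τ ↔ (1 ≤ τ ∧ (τ % 3 = 2 ∨ τ % 3 = 0)) := by
  unfold isMover; simp <;> omega

lemma notMover0 (τ : ℕ) : ¬ isMover 0 τ ↔ (τ = 0 ∨ τ % 3 = 2) := by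
  rw [mover0]; omega

lemma notMover1 (τ : ℕ) : ¬ isMover 1 τ ↔ (τ = 0 ∨ τ % 3 = 0) := by
  rw [mover1]; omega

lemma notMover2 (τ : ℕ) : ¬ isMover 2 τ ↔ (τ = 0 ∨ τ % 3 = 1) := by
  rw [mover2]; omega

lemma rnd_zero : rnd 0 = 1 := by unfold rnd rdOf; omega

lemma rnd_val (j x : ℕ) (h1 : 1 ≤ x) (h2 : 3*x-2 ≤ j) (h3 : j ≤ 3*x) : rnd j = x := by
  unfold rnd rdOf; omega

lemma rnd_bounds (j : ℕ) (h : 1 ≤ j) : 3 * rnd j - 2 ≤ j ∧ j ≤ 3 * rnd j ∧ 1 ≤ rnd j := by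
  unfold rnd rdOf; omega

variable {Col : Type} [Finite Col] {Ci : Set Col} {DP HP VP : Set (Col × Col)}
variable {P T : Type} {N : PreNet P T} {fp : P → CPPlace Col} {ft : T → CPTrans Col}
variable (hwin : IsWinningStrategy (cpGame Col Ci DP HP VP) N fp ft)
include hwin

lemma medE {a d : Fin 3} {jT jB mT mB : ℕ} {c : Col} (hne : a ≠ d)
    (hcT : jT = 0 ∨ isMover a jT) (hcB : jB = 0 ∨ isMover a jB)
    (hdT : mT = 0 ∨ isMover d mT) (hdB : mB = 0 ∨ isMover d mB)
    (hrT : rnd jT = rnd mT) (hrB : rnd jB = rnd mB)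
    (hlaT : ∀ τ, jT < τ → τ ≤ max jT mT → ¬ isMover a τ)
    (hldT : ∀ τ, mT < τ → τ ≤ max jT mT → ¬ isMover d τ)
    (hlaB : ∀ τ, jB < τ → τ ≤ max jB mB → ¬ isMover a τ)
    (hldB : ∀ τ, mB < τ → τ ≤ max jB mB → ¬ isMover d τ)
    (h : NodeCol hwin a jT jB c) : NodeCol hwin d mT mB c :=
  med hwin hne hlaT hldT hlaB hldB
    (sameRound_of a d jT mT hcT hdT hrT)
    (sameRound_of a d jB mB hcB hdB hrB) h

end Chain1
end PG
namespace PG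
section Chain2

open PreNet

variable {Col : Type} [Finite Col] {Ci : Set Col} {DP HP VP : Set (Col × Col)}
variable {P T : Type} {N : PreNet P T} {fp : P → CPPlace Col} {ft : T → CPTrans Col}
variable (hwin : IsWinningStrategy (cpGame Col Ci DP HP VP) N fp ft)
include hwin

lemma L_hub0 {x y jT jB : ℕ} (hx : 1 ≤ x) (hy : 1 ≤ y)
    (hjT : jT = 3*x-2 ∨ jT = 3*x) (hjB : jB = 3*y-2 ∨ jB = 3*y) {c : Col}
    (h : NodeCol hwin 0 jT jB c) : NodeCol hwin 1 (3*x-1) (3*y-1) c := by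
  refine medE hwin (by decide)
    (Or.inr ((mover0 jT).mpr (by omega)))
    (Or.inr ((mover0 jB).mpr (by omega)))
    (Or.inr ((mover1 (3*x-1)).mpr (by omega)))
    (Or.inr ((mover1 (3*y-1)).mpr (by omega)))
    (by rw [rnd_val jT x hx (by omega) (by omega), rnd_val (3*x-1) x hx (by omega) (by omega)])
    (by rw [rnd_val jB y hy (by omega) (by omega), rnd_val (3*y-1) y hy (by omega) (by omega)])
    (by intro τ h1 h2; rw [notMover0]; omega)
    (by intro τ h1 h2; rw [notMover1]; omega)
    (by intro τ h1 h2; rw [notMover0]; omega)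
    (by intro τ h1 h2; rw [notMover1]; omega)
    h

lemma L_hub2 {x y jT jB : ℕ} (hx : 1 ≤ x) (hy : 1 ≤ y)
    (hjT : jT = 3*x-1 ∨ jT = 3*x) (hjB : jB = 3*y-1 ∨ jB = 3*y) {c : Col}
    (h : NodeCol hwin 2 jT jB c) : NodeCol hwin 1 (3*x-1) (3*y-1) c := by
  refine medE hwin (by decide)
    (Or.inr ((mover2 jT).mpr (by omega)))
    (Or.inr ((mover2 jB).mpr (by omega)))
    (Or.inr ((mover1 (3*x-1)).mpr (by omega)))
    (Or.inr ((mover1 (3*y-1)).mpr (by omega)))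
    (by rw [rnd_val jT x hx (by omega) (by omega), rnd_val (3*x-1) x hx (by omega) (by omega)])
    (by rw [rnd_val jB y hy (by omega) (by omega), rnd_val (3*y-1) y hy (by omega) (by omega)])
    (by intro τ h1 h2; rw [notMover2]; omega)
    (by intro τ h1 h2; rw [notMover1]; omega)
    (by intro τ h1 h2; rw [notMover2]; omega)
    (by intro τ h1 h2; rw [notMover1]; omega)
    h

lemma L_p10 {x y jT jB : ℕ} (hx : 1 ≤ x) (hy : 1 ≤ y)
    (hjT : jT = 3*x-2 ∨ jT = 3*x-1) (hjB : jB = 3*y-2 ∨ jB = 3*y-1) {c : Col}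
    (h : NodeCol hwin 1 jT jB c) : NodeCol hwin 0 (3*x-2) (3*y-2) c := by
  refine medE hwin (by decide)
    (Or.inr ((mover1 jT).mpr (by omega)))
    (Or.inr ((mover1 jB).mpr (by omega)))
    (Or.inr ((mover0 (3*x-2)).mpr (by omega)))
    (Or.inr ((mover0 (3*y-2)).mpr (by omega)))
    (by rw [rnd_val jT x hx (by omega) (by omega), rnd_val (3*x-2) x hx (by omega) (by omega)])
    (by rw [rnd_val jB y hy (by omega) (by omega), rnd_val (3*y-2) y hy (by omega) (by omega)])
    (by intro τ h1 h2; rw [notMover1]; omega)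
    (by intro τ h1 h2; rw [notMover0]; omega)
    (by intro τ h1 h2; rw [notMover1]; omega)
    (by intro τ h1 h2; rw [notMover0]; omega)
    h

lemma L4 {c : Col} (h : NodeCol hwin 1 0 0 c) : NodeCol hwin 2 0 0 c := by
  refine medE hwin (by decide) (Or.inl rfl) (Or.inl rfl) (Or.inl rfl) (Or.inl rfl)
    rfl rfl
    (by intro τ h1 h2; omega) (by intro τ h1 h2; omega)
    (by intro τ h1 h2; omega) (by intro τ h1 h2; omega) h

lemma L5 {y jB : ℕ} (hy : 1 ≤ y) (hjB : jB = 3*y-2) {c : Col}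
    (h : NodeCol hwin 1 0 jB c) : NodeCol hwin 0 0 (3*y-2) c := by
  refine medE hwin (by decide) (Or.inl rfl)
    (Or.inr ((mover1 jB).mpr (by omega)))
    (Or.inl rfl)
    (Or.inr ((mover0 (3*y-2)).mpr (by omega)))
    rfl
    (by rw [rnd_val jB y hy (by omega) (by omega), rnd_val (3*y-2) y hy (by omega) (by omega)])
    (by intro τ h1 h2; omega) (by intro τ h1 h2; omega)
    (by intro τ h1 h2; rw [notMover1]; omega)
    (by intro τ h1 h2; rw [notMover0]; omega) h

lemma L6 {y jB : ℕ} (hy : 1 ≤ y) (hjB : jB = 3*y-1) {c : Col}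
    (h : NodeCol hwin 1 0 jB c) : NodeCol hwin 2 0 (3*y-1) c := by
  refine medE hwin (by decide) (Or.inl rfl)
    (Or.inr ((mover1 jB).mpr (by omega)))
    (Or.inl rfl)
    (Or.inr ((mover2 (3*y-1)).mpr (by omega)))
    rfl
    (by rw [rnd_val jB y hy (by omega) (by omega), rnd_val (3*y-1) y hy (by omega) (by omega)])
    (by intro τ h1 h2; omega) (by intro τ h1 h2; omega)
    (by intro τ h1 h2; rw [notMover1]; omega)
    (by intro τ h1 h2; rw [notMover2]; omega) h

lemma L7a {y : ℕ} (hy : 1 ≤ y) {c : Col}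
    (h : NodeCol hwin 0 0 (3*y-2) c) : NodeCol hwin 2 0 (3*y-1) c := by
  refine medE hwin (by decide) (Or.inl rfl)
    (Or.inr ((mover0 (3*y-2)).mpr (by omega)))
    (Or.inl rfl)
    (Or.inr ((mover2 (3*y-1)).mpr (by omega)))
    rfl
    (by rw [rnd_val (3*y-2) y hy (by omega) (by omega), rnd_val (3*y-1) y hy (by omega) (by omega)])
    (by intro τ h1 h2; omega) (by intro τ h1 h2; omega)
    (by intro τ h1 h2; rw [notMover0]; omega)
    (by intro τ h1 h2; rw [notMover2]; omega) h

lemma L7b {y : ℕ} (hy : 1 ≤ y) {c : Col}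
    (h : NodeCol hwin 0 0 (3*y) c) : NodeCol hwin 2 0 (3*y) c := by
  refine medE hwin (by decide) (Or.inl rfl)
    (Or.inr ((mover0 (3*y)).mpr (by omega)))
    (Or.inl rfl)
    (Or.inr ((mover2 (3*y)).mpr (by omega)))
    rfl
    (by rw [rnd_val (3*y) y hy (by omega) (by omega)])
    (by intro τ h1 h2; omega) (by intro τ h1 h2; omega)
    (by intro τ h1 h2; rw [notMover0]; omega)
    (by intro τ h1 h2; rw [notMover2]; omega) h

lemma L7c {c : Col} (h : NodeCol hwin 0 0 0 c) : NodeCol hwin 2 0 0 c := by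
  refine medE hwin (by decide) (Or.inl rfl) (Or.inl rfl) (Or.inl rfl) (Or.inl rfl)
    rfl rfl
    (by intro τ h1 h2; omega) (by intro τ h1 h2; omega)
    (by intro τ h1 h2; omega) (by intro τ h1 h2; omega) h

lemma L8a {y : ℕ} (hy : 1 ≤ y) {c : Col}
    (h : NodeCol hwin 2 0 (3*y-1) c) : NodeCol hwin 1 1 (3*y-1) c := by
  refine medE hwin (by decide) (Or.inl rfl)
    (Or.inr ((mover2 (3*y-1)).mpr (by omega)))
    (Or.inr ((mover1 1).mpr (by omega)))
    (Or.inr ((mover1 (3*y-1)).mpr (by omega)))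
    (by rw [rnd_zero, rnd_val 1 1 (by omega) (by omega) (by omega)])
    (by rw [rnd_val (3*y-1) y hy (by omega) (by omega)])
    (by intro τ h1 h2; rw [notMover2]; omega)
    (by intro τ h1 h2; rw [notMover1]; omega)
    (by intro τ h1 h2; rw [notMover2]; omega)
    (by intro τ h1 h2; rw [notMover1]; omega) h

lemma L8b {y : ℕ} (hy : 1 ≤ y) {c : Col}
    (h : NodeCol hwin 2 0 (3*y) c) : NodeCol hwin 1 1 (3*y-1) c := by
  refine medE hwin (by decide) (Or.inl rfl)
    (Or.inr ((mover2 (3*y)).mpr (by omega)))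
    (Or.inr ((mover1 1).mpr (by omega)))
    (Or.inr ((mover1 (3*y-1)).mpr (by omega)))
    (by rw [rnd_zero, rnd_val 1 1 (by omega) (by omega) (by omega)])
    (by rw [rnd_val (3*y) y hy (by omega) (by omega), rnd_val (3*y-1) y hy (by omega) (by omega)])
    (by intro τ h1 h2; rw [notMover2]; omega)
    (by intro τ h1 h2; rw [notMover1]; omega)
    (by intro τ h1 h2; rw [notMover2]; omega)
    (by intro τ h1 h2; rw [notMover1]; omega) h

lemma L8c {c : Col} (h : NodeCol hwin 2 0 0 c) : NodeCol hwin 1 1 1 c := by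
  refine medE hwin (by decide) (Or.inl rfl) (Or.inl rfl)
    (Or.inr ((mover1 1).mpr (by omega)))
    (Or.inr ((mover1 1).mpr (by omega)))
    (by rw [rnd_zero, rnd_val 1 1 (by omega) (by omega) (by omega)])
    (by rw [rnd_zero, rnd_val 1 1 (by omega) (by omega) (by omega)])
    (by intro τ h1 h2; rw [notMover2]; omega)
    (by intro τ h1 h2; rw [notMover1]; omega)
    (by intro τ h1 h2; rw [notMover2]; omega)
    (by intro τ h1 h2; rw [notMover1]; omega) h

lemma L5' {x jT : ℕ} (hx : 1 ≤ x) (hjT : jT = 3*x-2) {c : Col}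
    (h : NodeCol hwin 1 jT 0 c) : NodeCol hwin 0 (3*x-2) 0 c := by
  refine medE hwin (by decide)
    (Or.inr ((mover1 jT).mpr (by omega)))
    (Or.inl rfl)
    (Or.inr ((mover0 (3*x-2)).mpr (by omega)))
    (Or.inl rfl)
    (by rw [rnd_val jT x hx (by omega) (by omega), rnd_val (3*x-2) x hx (by omega) (by omega)])
    rfl
    (by intro τ h1 h2; rw [notMover1]; omega)
    (by intro τ h1 h2; rw [notMover0]; omega)
    (by intro τ h1 h2; omega) (by intro τ h1 h2; omega) h

lemma L6' {x jT : ℕ} (hx : 1 ≤ x) (hjT : jT = 3*x-1) {c : Col}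
    (h : NodeCol hwin 1 jT 0 c) : NodeCol hwin 2 (3*x-1) 0 c := by
  refine medE hwin (by decide)
    (Or.inr ((mover1 jT).mpr (by omega)))
    (Or.inl rfl)
    (Or.inr ((mover2 (3*x-1)).mpr (by omega)))
    (Or.inl rfl)
    (by rw [rnd_val jT x hx (by omega) (by omega), rnd_val (3*x-1) x hx (by omega) (by omega)])
    rfl
    (by intro τ h1 h2; rw [notMover1]; omega)
    (by intro τ h1 h2; rw [notMover2]; omega)
    (by intro τ h1 h2; omega) (by intro τ h1 h2; omega) h

lemma L7a' {x : ℕ} (hx : 1 ≤ x) {c : Col}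
    (h : NodeCol hwin 0 (3*x-2) 0 c) : NodeCol hwin 2 (3*x-1) 0 c := by
  refine medE hwin (by decide)
    (Or.inr ((mover0 (3*x-2)).mpr (by omega)))
    (Or.inl rfl)
    (Or.inr ((mover2 (3*x-1)).mpr (by omega)))
    (Or.inl rfl)
    (by rw [rnd_val (3*x-2) x hx (by omega) (by omega), rnd_val (3*x-1) x hx (by omega) (by omega)])
    rfl
    (by intro τ h1 h2; rw [notMover0]; omega)
    (by intro τ h1 h2; rw [notMover2]; omega)
    (by intro τ h1 h2; omega) (by intro τ h1 h2; omega) h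

lemma L7b' {x : ℕ} (hx : 1 ≤ x) {c : Col}
    (h : NodeCol hwin 0 (3*x) 0 c) : NodeCol hwin 2 (3*x) 0 c := by
  refine medE hwin (by decide)
    (Or.inr ((mover0 (3*x)).mpr (by omega)))
    (Or.inl rfl)
    (Or.inr ((mover2 (3*x)).mpr (by omega)))
    (Or.inl rfl)
    (by rw [rnd_val (3*x) x hx (by omega) (by omega)])
    rfl
    (by intro τ h1 h2; rw [notMover0]; omega)
    (by intro τ h1 h2; rw [notMover2]; omega)
    (by intro τ h1 h2; omega) (by intro τ h1 h2; omega) h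

lemma L8a' {x : ℕ} (hx : 1 ≤ x) {c : Col}
    (h : NodeCol hwin 2 (3*x-1) 0 c) : NodeCol hwin 1 (3*x-1) 1 c := by
  refine medE hwin (by decide)
    (Or.inr ((mover2 (3*x-1)).mpr (by omega)))
    (Or.inl rfl)
    (Or.inr ((mover1 (3*x-1)).mpr (by omega)))
    (Or.inr ((mover1 1).mpr (by omega)))
    (by rw [rnd_val (3*x-1) x hx (by omega) (by omega)])
    (by rw [rnd_zero, rnd_val 1 1 (by omega) (by omega) (by omega)])
    (by intro τ h1 h2; rw [notMover2]; omega)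
    (by intro τ h1 h2; rw [notMover1]; omega)
    (by intro τ h1 h2; rw [notMover2]; omega)
    (by intro τ h1 h2; rw [notMover1]; omega) h

lemma L8b' {x : ℕ} (hx : 1 ≤ x) {c : Col}
    (h : NodeCol hwin 2 (3*x) 0 c) : NodeCol hwin 1 (3*x-1) 1 c := by
  refine medE hwin (by decide)
    (Or.inr ((mover2 (3*x)).mpr (by omega)))
    (Or.inl rfl)
    (Or.inr ((mover1 (3*x-1)).mpr (by omega)))
    (Or.inr ((mover1 1).mpr (by omega)))
    (by rw [rnd_val (3*x) x hx (by omega) (by omega), rnd_val (3*x-1) x hx (by omega) (by omega)])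
    (by rw [rnd_zero, rnd_val 1 1 (by omega) (by omega) (by omega)])
    (by intro τ h1 h2; rw [notMover2]; omega)
    (by intro τ h1 h2; rw [notMover1]; omega)
    (by intro τ h1 h2; rw [notMover2]; omega)
    (by intro τ h1 h2; rw [notMover1]; omega) h

end Chain2
end PG
namespace PG
section Chain3

open PreNet

lemma rnd_pos (j : ℕ) : 1 ≤ rnd j := by unfold rnd; omega

variable {Col : Type} [Finite Col] {Ci : Set Col} {DP HP VP : Set (Col × Col)}
variable {P T : Type} {N : PreNet P T} {fp : P → CPPlace Col} {ft : T → CPTrans Col}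
variable (hwin : IsWinningStrategy (cpGame Col Ci DP HP VP) N fp ft)
include hwin

lemma toHub (a : Fin 3) (jT jB : ℕ) (hcT : jT = 0 ∨ isMover a jT)
    (hcB : jB = 0 ∨ isMover a jB) {c : Col} (h : NodeCol hwin a jT jB c) :
    NodeCol hwin 1 (3 * rnd jT - 1) (3 * rnd jB - 1) c := by
  have hx : 1 ≤ rnd jT := rnd_pos jT
  have hy : 1 ≤ rnd jB := rnd_pos jB
  set x := rnd jT with hxd
  set y := rnd jB with hyd
  by_cases hT0 : jT = 0
  · subst hT0
    have hx1 : x = 1 := by rw [hxd, rnd_zero]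
    by_cases hB0 : jB = 0
    · subst hB0
      have hy1 : y = 1 := by rw [hyd, rnd_zero]
      rw [hx1, hy1]
      have h200 : NodeCol hwin 2 0 0 c := by
        fin_cases a
        · exact L7c hwin h
        · exact L4 hwin h
        · exact h
      have h111 := L8c hwin h200
      have h011 := L_p10 hwin (x := 1) (y := 1) (by omega) (by omega) (by omega) (by omega) h111
      exact L_hub0 hwin (x := 1) (y := 1) (by omega) (by omega) (by omega) (by omega) h011
    · have hby := rnd_bounds jB (by omega)
      rw [hx1]
      have h11 : NodeCol hwin 1 1 (3*y-1) c := by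
        fin_cases a
        · have hm := (mover0 jB).mp (hcB.resolve_left hB0)
          have hcase : jB = 3*y-2 ∨ jB = 3*y := by omega
          rcases hcase with hc1 | hc1
          · rw [hc1] at h
            exact L8a hwin hy (L7a hwin hy h)
          · rw [hc1] at h
            exact L8b hwin hy (L7b hwin hy h)
        · have hm := (mover1 jB).mp (hcB.resolve_left hB0)
          have hcase : jB = 3*y-2 ∨ jB = 3*y-1 := by omega
          rcases hcase with hc1 | hc1
          · exact L8a hwin hy (L7a hwin hy (L5 hwin hy hc1 h))
          · exact L8a hwin hy (L6 hwin hy hc1 h)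
        · have hm := (mover2 jB).mp (hcB.resolve_left hB0)
          have hcase : jB = 3*y-1 ∨ jB = 3*y := by omega
          rcases hcase with hc1 | hc1
          · rw [hc1] at h
            exact L8a hwin hy h
          · rw [hc1] at h
            exact L8b hwin hy h
      have h0 := L_p10 hwin (x := 1) (y := y) (by omega) hy (by omega) (by omega) h11
      exact L_hub0 hwin (x := 1) (y := y) (by omega) hy (by omega) (by omega) h0
  · have hbx := rnd_bounds jT (by omega)
    by_cases hB0 : jB = 0
    · subst hB0
      have hy1 : y = 1 := by rw [hyd, rnd_zero]
      rw [hy1]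
      have h11 : NodeCol hwin 1 (3*x-1) 1 c := by
        fin_cases a
        · have hm := (mover0 jT).mp (hcT.resolve_left hT0)
          have hcase : jT = 3*x-2 ∨ jT = 3*x := by omega
          rcases hcase with hc1 | hc1
          · rw [hc1] at h
            exact L8a' hwin hx (L7a' hwin hx h)
          · rw [hc1] at h
            exact L8b' hwin hx (L7b' hwin hx h)
        · have hm := (mover1 jT).mp (hcT.resolve_left hT0)
          have hcase : jT = 3*x-2 ∨ jT = 3*x-1 := by omega
          rcases hcase with hc1 | hc1
          · exact L8a' hwin hx (L7a' hwin hx (L5' hwin hx hc1 h))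
          · exact L8a' hwin hx (L6' hwin hx hc1 h)
        · have hm := (mover2 jT).mp (hcT.resolve_left hT0)
          have hcase : jT = 3*x-1 ∨ jT = 3*x := by omega
          rcases hcase with hc1 | hc1
          · rw [hc1] at h
            exact L8a' hwin hx h
          · rw [hc1] at h
            exact L8b' hwin hx h
      have h0 := L_p10 hwin (x := x) (y := 1) hx (by omega) (by omega) (by omega) h11
      exact L_hub0 hwin (x := x) (y := 1) hx (by omega) (by omega) (by omega) h0
    · have hby := rnd_bounds jB (by omega)
      fin_cases a
      · have hmT := (mover0 jT).mp (hcT.resolve_left hT0)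
        have hmB := (mover0 jB).mp (hcB.resolve_left hB0)
        exact L_hub0 hwin hx hy (by omega) (by omega) h
      · have hmT := (mover1 jT).mp (hcT.resolve_left hT0)
        have hmB := (mover1 jB).mp (hcB.resolve_left hB0)
        have h0 := L_p10 hwin hx hy (by omega) (by omega) h
        exact L_hub0 hwin hx hy (by omega) (by omega) h0
      · have hmT := (mover2 jT).mp (hcT.resolve_left hT0)
        have hmB := (mover2 jB).mp (hcB.resolve_left hB0)
        exact L_hub2 hwin hx hy (by omega) (by omega) h

end Chain3
end PG
namespace PG
section Decomp

open PreNet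

variable {Col : Type} [Finite Col] {Ci : Set Col} {DP HP VP : Set (Col × Col)}
variable {P T : Type} {N : PreNet P T} {fp : P → CPPlace Col} {ft : T → CPTrans Col}
variable (hwin : IsWinningStrategy (cpGame Col Ci DP HP VP) N fp ft)
include hwin

lemma roundsIn_count (p : P) (u : T) (a : Fin 3) (jT jB : ℕ) (X : Bool)
    (hu : p ∈ N.post u)
    (hftu : ∃ j k : Fin 6, ft u = CPTrans.check a j k)
    (hpreu : N.pre u = {rOc hwin true a jT, rOc hwin false a jB})
    (hcT : jT = 0 ∨ isMover a jT) (hcB : jB = 0 ∨ isMover a jB) :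
    roundsIn N ft X p = rnd (if X then jT else jB) := by
  set jX : ℕ := if X then jT else jB with hjX
  have hSeq : {v : T | N.le (Sum.inr v) (Sum.inl p) ∧ ∃ r k, ft v = CPTrans.round X r k} =
      (fun i => rTr hwin X i) '' Set.Icc 1 jX := by
    ext v
    constructor
    · rintro ⟨hle, r, k', hftv⟩
      obtain ⟨w, hwpost, hcase⟩ := le_inr_inl hle
      have hwu : w = u := producer_unique hwin hwpost hu
      subst hwu
      rcases hcase with rfl | ⟨z, hz, hlez⟩
      · exfalso
        obtain ⟨j, k, hj⟩ := hftu
        rw [hj] at hftv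
        simp at hftv
      · rw [hpreu] at hz
        rcases hz with rfl | rfl
        · -- top occurrence
          obtain ⟨i, hi1, hi2, rfl⟩ := ((rSpec hwin true jT).le_char a jT (le_refl _) v).mp hlez
          rw [canonical_lastMove a jT hcT] at hi2
          cases X
          · -- X = false but the label is a top label
            exfalso
            have := (rSpec hwin true jT).tr_ft i hi1 (le_trans hi2 (le_refl _))
            rw [this] at hftv
            simp [labOf] at hftv
          · exact ⟨i, ⟨hi1, by simpa [hjX] using hi2⟩, rfl⟩
        · obtain ⟨i, hi1, hi2, rfl⟩ := ((rSpec hwin false jB).le_char a jB (le_refl _) v).mp hlez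
          rw [canonical_lastMove a jB hcB] at hi2
          cases X
          · exact ⟨i, ⟨hi1, by simpa [hjX] using hi2⟩, rfl⟩
          · exfalso
            have := (rSpec hwin false jB).tr_ft i hi1 (le_trans hi2 (le_refl _))
            rw [this] at hftv
            simp [labOf] at hftv
    · rintro ⟨i, ⟨hi1, hi2⟩, rfl⟩
      have hi2' : i ≤ jX := hi2
      constructor
      · cases X
        · have hjX' : jX = jB := by simp [hjX]
          have hmem : rOc hwin false a jB ∈ N.pre u := by rw [hpreu]; right; rfl
          have hchar : N.le (Sum.inr (rTr hwin false i)) (Sum.inl (rOc hwin false a jB)) := by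
            apply ((rSpec hwin false jB).le_char a jB (le_refl _) _).mpr
            exact ⟨i, hi1, by rw [canonical_lastMove a jB hcB]; omega, rfl⟩
          exact le_trans' hchar (le_trans' (le_pre hmem) (le_post hu))
        · have hjX' : jX = jT := by simp [hjX]
          have hmem : rOc hwin true a jT ∈ N.pre u := by rw [hpreu]; left; rfl
          have hchar : N.le (Sum.inr (rTr hwin true i)) (Sum.inl (rOc hwin true a jT)) := by
            apply ((rSpec hwin true jT).le_char a jT (le_refl _) _).mpr
            exact ⟨i, hi1, by rw [canonical_lastMove a jT hcT]; omega, rfl⟩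
          exact le_trans' hchar (le_trans' (le_pre hmem) (le_post hu))
      · exact ⟨_, _, by rw [(rSpec hwin X i).tr_ft i hi1 (le_refl i)]; rfl⟩
  have hcard : Nat.card {v : T // N.le (Sum.inr v) (Sum.inl p) ∧
      ∃ r k, ft v = CPTrans.round X r k} = jX := by
    have h1 : Nat.card {v : T // N.le (Sum.inr v) (Sum.inl p) ∧
        ∃ r k, ft v = CPTrans.round X r k} =
        Set.ncard {v : T | N.le (Sum.inr v) (Sum.inl p) ∧
        ∃ r k, ft v = CPTrans.round X r k} := Nat.card_coe_set_eq _
    rw [h1, hSeq]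
    rw [Set.ncard_image_of_injOn]
    · rw [← Finset.coe_Icc, Set.ncard_coe_finset, Nat.card_Icc]
      omega
    · intro i₁ h₁ i₂ h₂ he
      simp only [Set.mem_Icc] at h₁ h₂
      by_contra hne
      rcases Nat.lt_or_ge i₁ i₂ with hlt | hge
      · exact (rSpec hwin X jX).tr_inj h₁.1 hlt h₂.2 he
      · exact (rSpec hwin X jX).tr_inj h₂.1 (by omega) h₁.2 he.symm
  rw [roundsIn, hcard]
  unfold rnd rdOf
  rfl

lemma sys_decomp (p : P) (a : Fin 3) (hp : fp p = CPPlace.sys a) {t : T} {c : Col}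
    (hpt : p ∈ N.pre t) (hc : ft t = CPTrans.colour a c) :
    ∃ jT jB, (jT = 0 ∨ isMover a jT) ∧ (jB = 0 ∨ isMover a jB) ∧
      NodeCol hwin a jT jB c ∧ roundsIn N ft true p = rnd jT ∧
      roundsIn N ft false p = rnd jB := by
  obtain ⟨u, hu⟩ := exists_producer hwin (q := p) (by
    rw [hp]; rintro ⟨X, b, hb⟩; simp at hb)
  have hfpu := fp_post hwin hu
  rcases hftu : ft u with ⟨Y, r, k⟩ | ⟨g, j, k⟩ | ⟨g, c'⟩ <;> rw [hftu] at hfpu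
  · exfalso
    rw [hp] at hfpu
    fin_cases k <;> simp [cpNet] at hfpu <;> rcases hfpu with ⟨h', -⟩ | ⟨h', -⟩ <;> simp at h'
  · -- check transition
    rw [hp] at hfpu
    rcases hfpu with h' | h'
    · exfalso; simp at h'
    · have hga : g = a := by simp at h'; exact h'.symm
      subst hga
      have hpre_bij : Set.BijOn fp (N.pre u) ((cpNet Col).pre (ft u)) := hwin.isBP.hom.pre_bij u
      rw [hftu] at hpre_bij
      obtain ⟨qT, qB, hqne, hpreu, hqT, hqB⟩ := bijOn_pair hpre_bij (by simp)
      obtain ⟨jT, hcT, hqTc⟩ := env_place_canonical hwin qT true g j hqT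
      obtain ⟨jB, hcB, hqBc⟩ := env_place_canonical hwin qB false g k hqB
      have hjidx : j = pIdx g jT := by
        have h1 := rOc_fp hwin true g jT
        rw [← hqTc, hqT] at h1
        simp at h1
        exact h1
      have hkidx : k = pIdx g jB := by
        have h1 := rOc_fp hwin false g jB
        rw [← hqBc, hqB] at h1
        simp at h1
        exact h1
      have hpreu' : N.pre u = {rOc hwin true g jT, rOc hwin false g jB} := by
        rw [hpreu, hqTc, hqBc]
      have hpret : N.pre t = {p} := colour_pre hwin hc hpt hp
      refine ⟨jT, jB, hcT, hcB,
        ⟨u, p, t, by rw [hftu, hjidx, hkidx], hpreu', hu, hp, hc, hpret⟩, ?_, ?_⟩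
      · have := roundsIn_count hwin p u g jT jB true hu ⟨j, k, hftu⟩ hpreu' hcT hcB
        simpa using this
      · have := roundsIn_count hwin p u g jT jB false hu ⟨j, k, hftu⟩ hpreu' hcT hcB
        simpa using this
  · exfalso
    rw [hp] at hfpu
    simp [cpNet] at hfpu

end Decomp
end PG
namespace PG

/-- (Well-definedness of the derived colouring.) Let `σ` be a
winning strategy of `G_CP`. If `p` and `p'` are system places of `σ` above `s_a`
and `s_b` respectively, with equal top round counts and equal bottom round
counts, and the strategy allows the colour transitions `t_{a,c}` at `p` and
`t_{b,c'}` at `p'`, then `c = c'`. Hence the colour chosen at given round counts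
`(x, y)` is a well-defined partial function. -/
theorem derived_colouring_well_defined {Col : Type} [Finite Col]
    (Ci : Set Col) (DP HP VP : Set (Col × Col))
    {P T : Type} (N : PreNet P T) (fp : P → CPPlace Col) (ft : T → CPTrans Col)
    (hwin : IsWinningStrategy (cpGame Col Ci DP HP VP) N fp ft)
    (p p' : P) (a b : Fin 3)
    (hp : fp p = CPPlace.sys a) (hp' : fp p' = CPPlace.sys b)
    (htop : roundsIn N ft true p = roundsIn N ft true p')
    (hbot : roundsIn N ft false p = roundsIn N ft false p')
    (t t' : T) (c c' : Col)
    (hpt : p ∈ N.pre t) (hpt' : p' ∈ N.pre t')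
    (hc : ft t = CPTrans.colour a c) (hc' : ft t' = CPTrans.colour b c') :
    c = c' := by
  obtain ⟨jT, jB, hcT, hcB, hnode, hrT, hrB⟩ := sys_decomp hwin p a hp hpt hc
  obtain ⟨jT', jB', hcT', hcB', hnode', hrT', hrB'⟩ := sys_decomp hwin p' b hp' hpt' hc'
  have e1 : rnd jT = rnd jT' := by rw [← hrT, ← hrT']; exact htop
  have e2 : rnd jB = rnd jB' := by rw [← hrB, ← hrB']; exact hbot
  have h1 := toHub hwin a jT jB hcT hcB hnode
  have h2 := toHub hwin b jT' jB' hcT' hcB' hnode'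
  rw [e1, e2] at h1
  exact nodeCol_unique hwin h1 h2

end PG
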